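/- arXiv:1312.3401 — 6 statements merged into one kernel-verified Lean document; each statement's English description precedes it below -/
import Mathlib

section
/- Let G be a graph and X, S subsets of V(G) such that no connected component of G - X contains more than half of the vertices of S - X. Then the components of G - X can be partitioned into at most three parts such that no part contains more than half the vertices of S - X. -/
open SimpleGraph

namespace TWPaper

/-- `(T, B)` is a tree decomposition of `G`. -/
def IsTreeDecomp {V ι : Type*} (G : SimpleGraph V) (T : SimpleGraph ι) (B : ι → Set V) : Prop :=
  T.IsTree ∧
  (∀ v w : V, G.Adj v w → ∃ x, v ∈ B x ∧ w ∈ B x) ∧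
  (∀ v : V, (T.induce {x | v ∈ B x}).Connected)

/-- `G` has a tree decomposition of width at most `k`. -/
def HasTDWidthLE {V : Type*} (G : SimpleGraph V) (k : ℕ) : Prop :=
  ∃ (ι : Type) (T : SimpleGraph ι) (B : ι → Set V),
    IsTreeDecomp G T B ∧ ∀ x, (B x).ncard ≤ k + 1

/-- Treewidth of `G`. -/
noncomputable def treewidth {V : Type*} (G : SimpleGraph V) : ℕ :=
  sInf {k | HasTDWidthLE G k}

/-- Two vertex sets touch: they intersect or an edge joins them. -/
def Touches {V : Type*} (G : SimpleGraph V) (A B : Set V) : Prop :=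
  (A ∩ B).Nonempty ∨ ∃ a ∈ A, ∃ b ∈ B, G.Adj a b

/-- A bramble: a set of connected subgraphs (given by vertex sets) that pairwise touch. -/
def IsBramble {V : Type*} (G : SimpleGraph V) (𝓑 : Set (Set V)) : Prop :=
  (∀ A ∈ 𝓑, (G.induce A).Connected) ∧ ∀ A ∈ 𝓑, ∀ B ∈ 𝓑, Touches G A B

/-- `S` hits every element of `𝓑`. -/
def IsHitting {V : Type*} (𝓑 : Set (Set V)) (S : Set V) : Prop :=
  ∀ A ∈ 𝓑, (S ∩ A).Nonempty

/-- The order of a bramble: minimum size of a hitting set. -/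
noncomputable def brambleOrder {V : Type*} (𝓑 : Set (Set V)) : ℕ :=
  sInf {n | ∃ S : Set V, IsHitting 𝓑 S ∧ S.ncard = n}

/-- The bramble number: maximum order of a bramble. -/
noncomputable def brambleNumber {V : Type*} (G : SimpleGraph V) : ℕ :=
  sSup {n | ∃ 𝓑 : Set (Set V), IsBramble G 𝓑 ∧ brambleOrder 𝓑 = n}

/-- A tangle: connected subgraphs such that any three share a vertex or
meet a common edge's endpoints. -/
def IsTangle {V : Type*} (G : SimpleGraph V) (τ : Set (Set V)) : Prop :=
  (∀ A ∈ τ, (G.induce A).Connected) ∧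
  ∀ A ∈ τ, ∀ B ∈ τ, ∀ C ∈ τ,
    (∃ v, v ∈ A ∩ B ∩ C) ∨
    ∃ u v, G.Adj u v ∧ (u ∈ A ∨ v ∈ A) ∧ (u ∈ B ∨ v ∈ B) ∧ (u ∈ C ∨ v ∈ C)

/-- The tangle number: maximum order of a tangle. -/
noncomputable def tangleNumber {V : Type*} (G : SimpleGraph V) : ℕ :=
  sSup {n | ∃ τ : Set (Set V), IsTangle G τ ∧ brambleOrder τ = n}

/-- `G - X` : delete the vertices of `X` (kept on the same vertex type,
vertices of `X` become isolated). -/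
def delVerts {V : Type*} (G : SimpleGraph V) (X : Set V) : SimpleGraph V where
  Adj a b := G.Adj a b ∧ a ∉ X ∧ b ∉ X
  symm := by
    constructor
    intro a b h
    exact ⟨h.1.symm, h.2.2, h.2.1⟩
  loopless := by
    constructor
    intro a h
    exact G.loopless.irrefl a h.1

/-- The vertex set of the component of `G - X` containing `v`. -/
def comp {V : Type*} (G : SimpleGraph V) (X : Set V) (v : V) : Set V :=
  {w | (delVerts G X).Reachable v w}

/-- `X` is a `(k, S, c)`-separator of `G`. -/
def IsSeparator {V : Type*} (G : SimpleGraph V) (k : ℕ) (S : Set V) (c : ℝ) (X : Set V) : Prop :=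
  X.ncard ≤ k ∧
  ∀ v ∉ X, ((comp G X v ∩ S).ncard : ℝ) ≤ c * ((S \ X).ncard : ℝ)

/-- The separation number `sep_c(G)`. -/
noncomputable def sepNum {V : Type*} (G : SimpleGraph V) (c : ℝ) : ℕ :=
  sInf {k | ∀ S : Set V, ∃ X : Set V, IsSeparator G k S c X}

/-- `X` is a `(k, S, c)*`-separator of `G`. -/
def IsStarSeparator {V : Type*} (G : SimpleGraph V) (k : ℕ) (S : Set V) (c : ℝ) (X : Set V) :
    Prop :=
  X.ncard ≤ k ∧
  ∀ v ∉ X, ((comp G X v ∩ (S \ X)).ncard : ℝ) ≤ c * (S.ncard : ℝ)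

/-- The variant separation number `sep*_c(G)`. -/
noncomputable def sepStarNum {V : Type*} (G : SimpleGraph V) (c : ℝ) : ℕ :=
  sInf {k | ∀ S : Set V, ∃ X : Set V, IsStarSeparator G k S c X}

/-- `G` has a branch decomposition of width at most `w`. -/
def HasBDWidthLE {V : Type*} (G : SimpleGraph V) (w : ℕ) : Prop :=
  ∃ (ι : Type) (_ : Finite ι) (T : SimpleGraph ι), T.IsTree ∧
    (∀ x : ι, (T.neighborSet x).ncard = 3 ∨ (T.neighborSet x).ncard = 1) ∧
    ∃ θ : G.edgeSet ≃ {x : ι // (T.neighborSet x).ncard = 1},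
      ∀ a b : ι, T.Adj a b →
        {v : V | ∃ e₁ e₂ : G.edgeSet, v ∈ e₁.1 ∧ v ∈ e₂.1 ∧
          ¬ (T.deleteEdges {s(a, b)}).Reachable (θ e₁).1 (θ e₂).1}.ncard ≤ w

/-- Branchwidth of `G` (`0` if no branch decomposition exists). -/
noncomputable def branchwidth {V : Type*} (G : SimpleGraph V) : ℕ :=
  sInf {w | HasBDWidthLE G w}

/-- `H` is a minor of `G`, via a model of branch sets. -/
def IsMinor {W V : Type*} (H : SimpleGraph W) (G : SimpleGraph V) : Prop :=
  ∃ f : W → Set V,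
    (∀ w, (G.induce (f w)).Connected) ∧
    (∀ a b, a ≠ b → Disjoint (f a) (f b)) ∧
    ∀ a b, H.Adj a b → ∃ u ∈ f a, ∃ v ∈ f b, G.Adj u v

/-- The lexicographic product `T[K_k]`. -/
def treeLex {ι : Type*} (T : SimpleGraph ι) (k : ℕ) : SimpleGraph (ι × Fin k) where
  Adj a b := T.Adj a.1 b.1 ∨ (a.1 = b.1 ∧ a.2 ≠ b.2)
  symm := by
    constructor
    rintro a b (h | ⟨h1, h2⟩)
    · exact Or.inl h.symm
    · exact Or.inr ⟨h1.symm, h2.symm⟩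
  loopless := by
    constructor
    rintro a (h | ⟨h1, h2⟩)
    · exact T.loopless.irrefl _ h
    · exact h2 rfl

/-- The lexicographic tree product number. -/
noncomputable def ltp {V : Type*} (G : SimpleGraph V) : ℕ :=
  sInf {k | ∃ (ι : Type) (T : SimpleGraph ι), T.IsTree ∧ IsMinor G (treeLex T k)}

/-- The cartesian tree product number. -/
noncomputable def ctp {V : Type*} (G : SimpleGraph V) : ℕ :=
  sInf {k | ∃ (ι : Type) (T : SimpleGraph ι), T.IsTree ∧
    IsMinor G (T.boxProd (completeGraph (Fin k)))}

/-- `S` is `k`-linked in `G`. -/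
def IsLinked {V : Type*} (G : SimpleGraph V) (k : ℕ) (S : Set V) : Prop :=
  ∀ X : Set V, X.ncard < k → ∃ v, v ∉ X ∧ S.ncard < 2 * (comp G X v ∩ S).ncard

/-- The linkedness of `G`: maximum `k ≥ 1` for which `G` has a `k`-linked set. -/
noncomputable def linkedness {V : Type*} (G : SimpleGraph V) : ℕ :=
  sSup {k | 0 < k ∧ ∃ S : Set V, IsLinked G k S}

/-- `S` is well-linked in `G`. -/
def WellLinked {V : Type*} (G : SimpleGraph V) (S : Set V) : Prop :=
  ∀ A B : Finset V, ↑A ⊆ S → ↑B ⊆ S → A.card = B.card →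
    ∃ (σ : A ≃ B) (p : ∀ a : A, G.Walk (a : V) ((σ a : V))),
      (∀ a, (p a).IsPath) ∧
      ∀ a a' : A, a ≠ a' → ∀ v, v ∈ (p a).support → v ∉ (p a').support

/-- `S` is externally-well-linked in `G`: the linking paths can be chosen with
no internal vertices in `S`. -/
def ExternallyWellLinked {V : Type*} (G : SimpleGraph V) (S : Set V) : Prop :=
  ∀ A B : Finset V, ↑A ⊆ S → ↑B ⊆ S → A.card = B.card →
    ∃ (σ : A ≃ B) (p : ∀ a : A, G.Walk (a : V) ((σ a : V))),
      (∀ a, (p a).IsPath) ∧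
      (∀ a a' : A, a ≠ a' → ∀ v, v ∈ (p a).support → v ∉ (p a').support) ∧
      ∀ a : A, ∀ v ∈ (p a).support, v ∈ S → v = (a : V) ∨ v = ((σ a : V))

/-- The well-linked number of `G`. -/
noncomputable def wellLinkedNum {V : Type*} (G : SimpleGraph V) : ℕ :=
  sSup {n | ∃ S : Set V, WellLinked G S ∧ S.ncard = n}

/-- A graph is chordal if every cycle of length at least 4 has a chord
(equivalently, there is no induced cycle of length at least four). -/
def Chordal {V : Type*} (H : SimpleGraph V) : Prop :=
  ∀ (v : V) (c : H.Walk v v), c.IsCycle → 4 ≤ c.length →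
    ∃ a b, a ∈ c.support ∧ b ∈ c.support ∧ H.Adj a b ∧ s(a, b) ∉ c.edges

/-- `G` is a `k`-tree. -/
inductive IsKTree (k : ℕ) : ∀ (V : Type), SimpleGraph V → Prop
  | base (V : Type) (G : SimpleGraph V) (h : Nonempty (G ≃g completeGraph (Fin (k + 1)))) :
      IsKTree k V G
  | step (V : Type) (G : SimpleGraph V) (v : V)
      (hdeg : (G.neighborSet v).ncard = k)
      (hcl : G.IsClique (G.neighborSet v))
      (h : IsKTree k ↥{u : V | u ≠ v} (G.induce {u : V | u ≠ v})) :
      IsKTree k V G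

/-- The `k × k` grid graph. -/
def grid (k : ℕ) : SimpleGraph (Fin k × Fin k) where
  Adj a b := (a.1 = b.1 ∧ (a.2.val + 1 = b.2.val ∨ b.2.val + 1 = a.2.val)) ∨
             (a.2 = b.2 ∧ (a.1.val + 1 = b.1.val ∨ b.1.val + 1 = a.1.val))
  symm := by
    constructor
    rintro a b (⟨h1, h2⟩ | ⟨h1, h2⟩)
    · exact Or.inl ⟨h1.symm, h2.symm⟩
    · exact Or.inr ⟨h1.symm, h2.symm⟩
  loopless := by
    constructor
    rintro a (⟨h1, h2⟩ | ⟨h1, h2⟩) <;> omega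

theorem three_split {α : Type*} (s : Finset α) (w : α → ℕ)
    (hw : ∀ a ∈ s, 2 * w a ≤ ∑ x ∈ s, w x) :
    ∃ g : α → Fin 3, ∀ i : Fin 3,
      2 * ∑ x ∈ s.filter (fun x => g x = i), w x ≤ ∑ x ∈ s, w x := by
  classical
  set n := ∑ x ∈ s, w x with hn
  rcases s.eq_empty_or_nonempty with rfl | hs
  · exact ⟨fun _ => 0, fun i => by simp⟩
  obtain ⟨a, ha, hamax⟩ := s.exists_max_image w hs
  set P := ((s.erase a).powerset).filter (fun t => 2 * ∑ x ∈ t, w x ≤ n) with hP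
  have hPne : P.Nonempty := ⟨∅, by simp [hP]⟩
  obtain ⟨t, htP, htmax⟩ := P.exists_max_image (fun t => ∑ x ∈ t, w x) hPne
  have hts : t ⊆ s.erase a := by
    have := (Finset.mem_filter.1 htP).1; exact Finset.mem_powerset.1 this
  have htle : 2 * ∑ x ∈ t, w x ≤ n := (Finset.mem_filter.1 htP).2
  refine ⟨fun x => if x = a then 0 else if x ∈ t then 1 else 2, fun i => ?_⟩
  set r := (s.erase a).filter (fun x => x ∉ t) with hr
  have hsplit : n = w a + (∑ x ∈ t, w x + ∑ x ∈ r, w x) := by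
    have h1 : ∑ x ∈ s.erase a, w x + w a = n := Finset.sum_erase_add s w ha
    have h2 : (s.erase a).filter (fun x => x ∈ t) = t := by
      ext x; simp only [Finset.mem_filter]
      exact ⟨fun h => h.2, fun h => ⟨hts h, h⟩⟩
    have h3 := Finset.sum_filter_add_sum_filter_not (s.erase a) (fun x => x ∈ t) w
    rw [h2, ← hr] at h3
    omega
  have hr2 : 2 * ∑ x ∈ r, w x ≤ n := by
    by_contra hcon
    push_neg at hcon
    have hrpos : ∑ x ∈ r, w x ≠ 0 := by omega
    obtain ⟨c, hcr, hwc⟩ := Finset.exists_ne_zero_of_sum_ne_zero hrpos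
    have hct : c ∉ t := (Finset.mem_filter.1 hcr).2
    have hcs : c ∈ s := Finset.mem_of_mem_erase (Finset.mem_filter.1 hcr).1
    have hwca : w c ≤ w a := hamax c hcs
    have hins : 2 * (w c + ∑ x ∈ t, w x) > n := by
      by_contra hno
      push_neg at hno
      have : insert c t ∈ P := by
        refine Finset.mem_filter.2 ⟨Finset.mem_powerset.2 ?_, ?_⟩
        · exact Finset.insert_subset (Finset.mem_filter.1 hcr).1 hts
        · rwa [Finset.sum_insert hct]
      have := htmax _ this
      rw [Finset.sum_insert hct] at this
      omega
    omega
  show 2 * ∑ x ∈ s.filter (fun x => (if x = a then (0:Fin 3) else if x ∈ t then 1 else 2) = i), w x ≤ n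
  fin_cases i
  · show 2 * ∑ x ∈ s.filter (fun x => (if x = a then (0:Fin 3) else if x ∈ t then 1 else 2) = 0), w x ≤ n
    have : s.filter (fun x => (if x = a then (0:Fin 3) else if x ∈ t then 1 else 2) = 0) = {a} := by
      ext x
      simp only [Finset.mem_filter, Finset.mem_singleton]
      constructor
      · rintro ⟨hx, hx2⟩
        by_contra hne
        simp only [if_neg hne] at hx2
        split at hx2 <;> simp_all
      · rintro rfl; simp [ha]
    rw [this, Finset.sum_singleton]
    exact hw a ha
  · show 2 * ∑ x ∈ s.filter (fun x => (if x = a then (0:Fin 3) else if x ∈ t then 1 else 2) = 1), w x ≤ n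
    have : s.filter (fun x => (if x = a then (0:Fin 3) else if x ∈ t then 1 else 2) = 1) = t := by
      ext x
      simp only [Finset.mem_filter]
      constructor
      · rintro ⟨hx, hx2⟩
        by_contra hne
        rcases eq_or_ne x a with rfl | hxa
        · simp at hx2
        · simp [hxa, hne] at hx2
      · intro hx
        have hxa : x ≠ a := Finset.ne_of_mem_erase (hts hx)
        exact ⟨Finset.mem_of_mem_erase (hts hx), by simp [hxa, hx]⟩
    rw [this]; exact htle
  · show 2 * ∑ x ∈ s.filter (fun x => (if x = a then (0:Fin 3) else if x ∈ t then 1 else 2) = 2), w x ≤ n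
    have : s.filter (fun x => (if x = a then (0:Fin 3) else if x ∈ t then 1 else 2) = 2) = r := by
      ext x
      simp only [Finset.mem_filter, hr]
      constructor
      · rintro ⟨hx, hx2⟩
        rcases eq_or_ne x a with rfl | hxa
        · simp at hx2
        · by_cases hxt : x ∈ t
          · simp [hxa, hxt] at hx2
          · exact ⟨Finset.mem_erase.2 ⟨hxa, hx⟩, hxt⟩
      · rintro ⟨hx, hxt⟩
        have hxa := Finset.ne_of_mem_erase hx
        exact ⟨Finset.mem_of_mem_erase hx, by simp [hxa, hxt]⟩
    rw [this]; exact hr2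

/-- if no component of `G - X` contains more than half of `S - X`,
the components can be partitioned into at most three parts, none containing
more than half of `S - X`. -/
theorem partition_components_three {V : Type} [Fintype V] (G : SimpleGraph V)
    (X S : Set V)
    (h : ∀ v ∉ X, 2 * (comp G X v ∩ (S \ X)).ncard ≤ (S \ X).ncard) :
    ∃ f : V → Fin 3,
      (∀ a b, (delVerts G X).Reachable a b → f a = f b) ∧
      ∀ i : Fin 3, 2 * ((S \ X) ∩ f ⁻¹' {i}).ncard ≤ (S \ X).ncard := by
  classical
  set H := delVerts G X with hH
  set cm : V → H.ConnectedComponent := H.connectedComponentMk with hcm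
  have : Fintype H.ConnectedComponent := Fintype.ofFinite _
  set T : Finset V := (Set.toFinite (S \ X)).toFinset with hT
  have hTcoe : (↑T : Set V) = S \ X := Set.Finite.coe_toFinset _
  have hTmem : ∀ v, v ∈ T ↔ v ∈ S \ X := fun v => by
    rw [← hTcoe]; rfl
  have hTcard : T.card = (S \ X).ncard := by
    rw [← hTcoe, Set.ncard_coe_finset]
  set w : H.ConnectedComponent → ℕ :=
    fun q => (T.filter (fun v => cm v = q)).card with hwdef
  have htot : ∑ q ∈ Finset.univ, w q = T.card :=
    (Finset.card_eq_sum_card_fiberwise (f := cm) (t := Finset.univ)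
      (fun x _ => Finset.mem_univ _)).symm
  -- vertices in X are isolated in H
  have hiso : ∀ v ∈ X, ∀ u, H.Reachable v u → v = u := by
    intro v hv u hr
    obtain ⟨p⟩ := hr
    cases p with
    | nil => rfl
    | cons hadj _ => exact absurd hv hadj.2.1
  have hwle : ∀ q ∈ Finset.univ, 2 * w q ≤ ∑ x ∈ Finset.univ, w x := by
    intro q _
    rw [htot]
    obtain ⟨v, hv⟩ := Quot.exists_rep q
    by_cases hvX : v ∈ X
    · have : T.filter (fun u => cm u = q) = ∅ := by
        rw [Finset.eq_empty_iff_forall_notMem]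
        intro u hu
        rw [Finset.mem_filter] at hu
        have hreach : H.Reachable u v := by
          have : cm u = cm v := by rw [hu.2, ← hv]; rfl
          exact (SimpleGraph.ConnectedComponent.eq.mp this)
        have := hiso v hvX u hreach.symm
        have := (hTmem u).1 hu.1
        simp_all [Set.mem_diff]
      simp [hwdef, this, hTcard]
    · have hkey := h v hvX
      have hset : comp G X v ∩ (S \ X) = ↑(T.filter (fun u => cm u = q)) := by
        ext u
        simp only [Set.mem_inter_iff, Finset.coe_filter, Set.mem_setOf_eq, hTmem]
        constructor
        · rintro ⟨hc, hu⟩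
          refine ⟨hu, ?_⟩
          have : cm v = cm u := SimpleGraph.ConnectedComponent.sound hc
          rw [← this, ← hv]; rfl
        · rintro ⟨hu, hq⟩
          refine ⟨?_, hu⟩
          have hqv : cm u = cm v := by rw [hq, ← hv]; rfl
          exact (SimpleGraph.ConnectedComponent.eq.mp hqv).symm
      rw [hset, Set.ncard_coe_finset] at hkey
      rw [hwdef, hTcard]
      exact hkey
  obtain ⟨g, hg⟩ := three_split Finset.univ w hwle
  refine ⟨fun v => g (cm v), ?_, ?_⟩
  · intro a b hr
    exact congrArg g (SimpleGraph.ConnectedComponent.sound hr)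
  · intro i
    have hgi := hg i
    rw [htot, hTcard] at hgi
    have hcard : ((S \ X) ∩ (fun v => g (cm v)) ⁻¹' {i}).ncard
        = ∑ q ∈ Finset.univ.filter (fun q => g q = i), w q := by
      have hseteq : (S \ X) ∩ (fun v => g (cm v)) ⁻¹' {i}
          = ↑(T.filter (fun v => g (cm v) = i)) := by
        ext u
        simp only [Set.mem_inter_iff, Set.mem_preimage, Set.mem_singleton_iff,
          Finset.coe_filter, Set.mem_setOf_eq, hTmem]
      rw [hseteq, Set.ncard_coe_finset]
      rw [Finset.card_eq_sum_card_fiberwise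
        (f := cm) (t := Finset.univ.filter (fun q => g q = i))
        (fun x hx => by
          rw [Finset.mem_coe, Finset.mem_filter] at hx ⊢
          exact ⟨Finset.mem_univ _, hx.2⟩)]
      refine Finset.sum_congr rfl fun q hq => ?_
      rw [Finset.mem_filter] at hq
      congr 1
      ext x
      simp only [Finset.mem_filter]
      constructor
      · rintro ⟨⟨hx, _⟩, hxq⟩; exact ⟨hx, hxq⟩
      · rintro ⟨hx, hxq⟩; exact ⟨⟨hx, by rw [hxq, hq.2]⟩, hxq⟩
    rw [hcard]
    exact hgi


end TWPaper
end

section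
/- For every graph G, the tangle number satisfies tn(G) <= bn(G) <= 2·tn(G). -/
open SimpleGraph

namespace TWPaper

section Aux

variable {V : Type} [Fintype V] {G : SimpleGraph V}

lemma aux_reach_within {A X : Set V} (hA : (G.induce A).Connected) (hAX : A ∩ X = ∅)
    {v w : V} (hv : v ∈ A) (hw : w ∈ A) : (delVerts G X).Reachable v w := by
  let φ : G.induce A →g delVerts G X :=
    { toFun := Subtype.val
      map_rel' := by
        rintro ⟨a, ha⟩ ⟨b, hb⟩ hab
        refine ⟨hab, fun h => ?_, fun h => ?_⟩
        · exact (Set.eq_empty_iff_forall_notMem.mp hAX a) ⟨ha, h⟩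
        · exact (Set.eq_empty_iff_forall_notMem.mp hAX b) ⟨hb, h⟩ }
  exact (hA.preconnected ⟨v, hv⟩ ⟨w, hw⟩).map φ

lemma aux_not_mem_of_walk {X : Set V} :
    ∀ {v w : V}, (delVerts G X).Walk v w → v ∉ X → w ∉ X
  | _, _, Walk.nil, h => h
  | _, _, Walk.cons hadj p, _ => aux_not_mem_of_walk p hadj.2.2

lemma aux_mem_comp_self (X : Set V) (v : V) : v ∈ comp G X v := Reachable.refl v

lemma aux_mem_comp_of_walk {X : Set V} {v u w : V} (hu : u ∈ comp G X v)
    (p : (delVerts G X).Walk u w) : w ∈ comp G X v :=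
  Reachable.trans hu p.reachable

lemma aux_induce_reach_of_walk {X : Set V} {v : V} :
    ∀ {u w : V} (p : (delVerts G X).Walk u w) (hu : u ∈ comp G X v),
      (G.induce (comp G X v)).Reachable ⟨u, hu⟩ ⟨w, aux_mem_comp_of_walk hu p⟩ := by
  intro u w p
  induction p with
  | nil => intro hu; exact Reachable.refl _
  | @cons a c d hadj q ih =>
    intro hu
    have hc : c ∈ comp G X v := aux_mem_comp_of_walk hu (Walk.cons hadj Walk.nil)
    have h1 : (G.induce (comp G X v)).Adj ⟨a, hu⟩ ⟨c, hc⟩ := hadj.1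
    exact (h1.reachable).trans (ih hc)

lemma aux_comp_connected {X : Set V} {v : V} : (G.induce (comp G X v)).Connected := by
  rw [connected_iff]
  refine ⟨?_, ⟨⟨v, aux_mem_comp_self X v⟩⟩⟩
  rintro ⟨u, hu⟩ ⟨w, hw⟩
  have h1 : (G.induce (comp G X v)).Reachable ⟨v, aux_mem_comp_self X v⟩ ⟨u, hu⟩ := by
    obtain ⟨p⟩ := hu
    exact aux_induce_reach_of_walk p (aux_mem_comp_self X v)
  have h2 : (G.induce (comp G X v)).Reachable ⟨v, aux_mem_comp_self X v⟩ ⟨w, hw⟩ := by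
    obtain ⟨p⟩ := hw
    exact aux_induce_reach_of_walk p (aux_mem_comp_self X v)
  exact h1.symm.trans h2

lemma aux_reach_across {A B X : Set V} (hA : (G.induce A).Connected)
    (hB : (G.induce B).Connected) (hAX : A ∩ X = ∅) (hBX : B ∩ X = ∅)
    (ht : Touches G A B) {v w : V} (hv : v ∈ A) (hw : w ∈ B) :
    (delVerts G X).Reachable v w := by
  rcases ht with ⟨u, huA, huB⟩ | ⟨a, ha, b, hb, hab⟩
  · exact (aux_reach_within hA hAX hv huA).trans (aux_reach_within hB hBX huB hw)
  · have haX : a ∉ X := fun h => (Set.eq_empty_iff_forall_notMem.mp hAX a) ⟨ha, h⟩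
    have hbX : b ∉ X := fun h => (Set.eq_empty_iff_forall_notMem.mp hBX b) ⟨hb, h⟩
    have hadj : (delVerts G X).Adj a b := ⟨hab, haX, hbX⟩
    exact ((aux_reach_within hA hAX hv ha).trans hadj.reachable).trans
      (aux_reach_within hB hBX hb hw)

lemma aux_exists_avoid {𝓑 : Set (Set V)} {S : Set V} (hS : S.ncard < brambleOrder 𝓑) :
    ∃ A ∈ 𝓑, A ∩ S = ∅ := by
  by_contra h
  push_neg at h
  have hit : IsHitting 𝓑 S := by
    intro A hA
    rw [Set.inter_comm]
    exact h A hA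
  have : brambleOrder 𝓑 ≤ S.ncard := Nat.sInf_le ⟨S, hit, rfl⟩
  omega

lemma aux_brambleOrder_le_card {𝓑 : Set (Set V)} (h : ∀ A ∈ 𝓑, A.Nonempty) :
    brambleOrder 𝓑 ≤ Fintype.card V := by
  refine Nat.sInf_le ⟨Set.univ, fun A hA => ?_, by simp [Set.ncard_univ]⟩
  simpa [Set.univ_inter] using h A hA

lemma aux_nonempty_of_connected {A : Set V} (h : (G.induce A).Connected) : A.Nonempty := by
  have := h.nonempty
  exact Set.nonempty_coe_sort.mp this

end Aux

/-- tn(G) ≤ bn(G) ≤ 2·tn(G). -/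
theorem tangle_bramble_bounds {V : Type} [Fintype V] (G : SimpleGraph V) :
    tangleNumber G ≤ brambleNumber G ∧ brambleNumber G ≤ 2 * tangleNumber G := by
  -- Every tangle is a bramble.
  have tangle_to_bramble : ∀ τ : Set (Set V), IsTangle G τ → IsBramble G τ := by
    rintro τ ⟨hconn, h3⟩
    refine ⟨hconn, fun A hA B hB => ?_⟩
    rcases h3 A hA B hB B hB with ⟨v, hv⟩ | ⟨u, v, huv, hu, hv, -⟩
    · exact Or.inl ⟨v, hv.1⟩
    · rcases hu with hu | hu <;> rcases hv with hv | hv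
      · exact Or.inl ⟨u, hu, hv⟩
      · exact Or.inr ⟨u, hu, v, hv, huv⟩
      · exact Or.inr ⟨v, hu, u, hv, huv.symm⟩
      · exact Or.inl ⟨v, hu, hv⟩
  have bddB : BddAbove {n | ∃ 𝓑 : Set (Set V), IsBramble G 𝓑 ∧ brambleOrder 𝓑 = n} := by
    refine ⟨Fintype.card V, ?_⟩
    rintro n ⟨𝓑, h𝓑, rfl⟩
    exact aux_brambleOrder_le_card fun A hA => aux_nonempty_of_connected (h𝓑.1 A hA)
  have bddT : BddAbove {n | ∃ τ : Set (Set V), IsTangle G τ ∧ brambleOrder τ = n} := by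
    refine ⟨Fintype.card V, ?_⟩
    rintro n ⟨τ, hτ, rfl⟩
    exact aux_brambleOrder_le_card fun A hA =>
      aux_nonempty_of_connected ((tangle_to_bramble τ hτ).1 A hA)
  have hne : (0 : ℕ) ∈ {n | ∃ τ : Set (Set V), IsTangle G τ ∧ brambleOrder τ = n} := by
    refine ⟨∅, ⟨fun A hA => hA.elim, fun A hA => hA.elim⟩, ?_⟩
    exact Nat.sInf_eq_zero.mpr (Or.inl ⟨∅, fun A hA => hA.elim, Set.ncard_empty V⟩)
  constructor
  · refine csSup_le_csSup bddB ⟨0, hne⟩ ?_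
    rintro n ⟨τ, hτ, rfl⟩
    exact ⟨τ, tangle_to_bramble τ hτ, rfl⟩
  · set b := brambleNumber G with hbdef
    rcases Nat.eq_zero_or_pos b with hb | hb
    · omega
    · have hBne : {n | ∃ 𝓑 : Set (Set V), IsBramble G 𝓑 ∧ brambleOrder 𝓑 = n}.Nonempty := by
        refine ⟨0, ∅, ⟨fun A hA => hA.elim, fun A hA => hA.elim⟩, ?_⟩
        exact Nat.sInf_eq_zero.mpr (Or.inl ⟨∅, fun A hA => hA.elim, Set.ncard_empty V⟩)
      have hmem : b ∈ {n | ∃ 𝓑 : Set (Set V), IsBramble G 𝓑 ∧ brambleOrder 𝓑 = n} :=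
        Nat.sSup_mem hBne bddB
      obtain ⟨𝓑, h𝓑, hord⟩ := hmem
      set k := (b + 1) / 2 with hkdef
      -- The tangle built from the bramble.
      set τ : Set (Set V) :=
        {C | ∃ X : Set V, X.ncard < k ∧ ∃ A ∈ 𝓑, A ∩ X = ∅ ∧ ∃ v ∈ A, C = comp G X v}
        with hτdef
      -- any element of 𝓑 avoiding X is contained in the component of any other
      -- element's vertex
      have hsub : ∀ (X : Set V) (A : Set V), A ∈ 𝓑 → A ∩ X = ∅ → ∀ v ∈ A,
          ∀ B ∈ 𝓑, B ∩ X = ∅ → B ⊆ comp G X v := by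
        intro X A hA hAX v hv B hBmem hBX w hw
        exact aux_reach_across (h𝓑.1 A hA) (h𝓑.1 B hBmem) hAX hBX
          (h𝓑.2 A hA B hBmem) hv hw
      have htangle : IsTangle G τ := by
        constructor
        · rintro C ⟨X, -, A, -, -, v, -, rfl⟩
          exact aux_comp_connected
        · rintro C1 ⟨X, hX, A1, hA1, hA1X, v1, hv1, rfl⟩
            C2 ⟨Y, hY, A2, hA2, hA2Y, v2, hv2, rfl⟩
            C3 ⟨Z, hZ, A3, hA3, hA3Z, v3, hv3, rfl⟩
          have hXY : (X ∪ Y).ncard < brambleOrder 𝓑 := by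
            have := Set.ncard_union_le X Y
            rw [hord]; omega
          obtain ⟨B1, hB1, hB1XY⟩ := aux_exists_avoid hXY
          have hB1X : B1 ∩ X = ∅ := by
            rw [Set.eq_empty_iff_forall_notMem] at hB1XY ⊢
            exact fun x hx => hB1XY x ⟨hx.1, Or.inl hx.2⟩
          have hB1Y : B1 ∩ Y = ∅ := by
            rw [Set.eq_empty_iff_forall_notMem] at hB1XY ⊢
            exact fun x hx => hB1XY x ⟨hx.1, Or.inr hx.2⟩
          have hZ' : Z.ncard < brambleOrder 𝓑 := by rw [hord]; omega
          obtain ⟨B2, hB2, hB2Z⟩ := aux_exists_avoid hZ'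
          have s1 : B1 ⊆ comp G X v1 := hsub X A1 hA1 hA1X v1 hv1 B1 hB1 hB1X
          have s2 : B1 ⊆ comp G Y v2 := hsub Y A2 hA2 hA2Y v2 hv2 B1 hB1 hB1Y
          have s3 : B2 ⊆ comp G Z v3 := hsub Z A3 hA3 hA3Z v3 hv3 B2 hB2 hB2Z
          rcases h𝓑.2 B1 hB1 B2 hB2 with ⟨u, hu1, hu2⟩ | ⟨a, ha, c, hc, hac⟩
          · exact Or.inl ⟨u, ⟨s1 hu1, s2 hu1⟩, s3 hu2⟩
          · exact Or.inr ⟨a, c, hac, Or.inl (s1 ha), Or.inl (s2 ha), Or.inr (s3 hc)⟩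
      have horder : k ≤ brambleOrder τ := by
        -- every hitting set of τ has size ≥ k
        have hub : ∀ S : Set V, IsHitting τ S → k ≤ S.ncard := by
          intro S hS
          by_contra hlt
          push_neg at hlt
          have hS' : S.ncard < brambleOrder 𝓑 := by rw [hord]; omega
          obtain ⟨A, hA, hAS⟩ := aux_exists_avoid hS'
          obtain ⟨v, hv⟩ := aux_nonempty_of_connected (h𝓑.1 A hA)
          have hCτ : comp G S v ∈ τ := ⟨S, hlt, A, hA, hAS, v, hv, rfl⟩
          obtain ⟨u, huS, huC⟩ := hS _ hCτ
          have hvS : v ∉ S := fun h => (Set.eq_empty_iff_forall_notMem.mp hAS v) ⟨hv, h⟩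
          obtain ⟨p⟩ := huC
          exact (aux_not_mem_of_walk p hvS) huS
        refine le_csInf ?_ ?_
        · refine ⟨(Set.univ : Set V).ncard, Set.univ, fun A hA => ?_, rfl⟩
          rcases hA with ⟨X, -, A', -, -, v, -, rfl⟩
          exact ⟨v, Set.mem_univ v, aux_mem_comp_self X v⟩
        · rintro n ⟨S, hSh, rfl⟩
          exact hub S hSh
      have htn : k ≤ tangleNumber G :=
        le_trans horder (le_csSup bddT ⟨τ, htangle, rfl⟩)
      omega

end TWPaper
end

section
/- For every graph G with branchwidth at least 2, tw(G) + 1 <= (3/2)·bw(G). -/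
open SimpleGraph

namespace TWPaper

section TreeSide

variable {ι : Type*} (T : SimpleGraph ι)

/-- The `y`-side of the edge `xy`: vertices reachable from `y` after deleting `xy`. -/
def side (x y : ι) : Set ι := {z | (T.deleteEdges {s(x,y)}).Reachable y z}

variable {T}

lemma side_del_swap (x y : ι) : T.deleteEdges {s(y,x)} = T.deleteEdges {s(x,y)} := by
  rw [Sym2.eq_swap]

lemma mem_side_self (x y : ι) : y ∈ side T x y := Reachable.refl y

lemma side_extend {x y z z' : ι} (hz : z ∈ side T x y) (hadj : T.Adj z z')
    (hne : s(z,z') ≠ s(x,y)) : z' ∈ side T x y :=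
  hz.trans (SimpleGraph.Adj.reachable (by simp [hadj, hne]))

/-- Walk induction: propagate a predicate along a walk. -/
lemma walk_pred {H : SimpleGraph ι} {P : ι → Prop}
    (hstep : ∀ ⦃u v⦄, H.Adj u v → P u → P v) :
    ∀ {a b : ι}, H.Walk a b → P a → P b := by
  intro a b w
  induction w with
  | nil => exact id
  | cons h p ih => exact fun ha => ih (hstep h ha)

lemma side_total {x y : ι} (hT : T.Connected) (z : ι) :
    z ∈ side T x y ∨ z ∈ side T y x := by
  obtain ⟨w⟩ := hT.preconnected y z
  refine walk_pred (P := fun z => z ∈ side T x y ∨ z ∈ side T y x) ?_ w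
    (Or.inl (mem_side_self x y))
  intro u v huv hu
  by_cases he : s(u,v) = s(x,y)
  · rw [Sym2.eq_iff] at he
    rcases he with ⟨rfl, rfl⟩ | ⟨rfl, rfl⟩
    · exact Or.inl (mem_side_self _ _)
    · exact Or.inr (mem_side_self _ _)
  · rcases hu with hu | hu
    · exact Or.inl (side_extend hu huv he)
    · refine Or.inr (side_extend hu huv ?_)
      intro hc
      exact he (hc.trans (Sym2.eq_swap))

lemma side_not_mem {x y z : ι} (hT : T.IsTree) (hxy : T.Adj x y)
    (h1 : z ∈ side T x y) (h2 : z ∈ side T y x) : False := by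
  have hb : ¬ (T.deleteEdges {s(x,y)}).Reachable x y := by
    have := (isAcyclic_iff_forall_adj_isBridge.mp hT.2) hxy
    exact this
  have h2' : (T.deleteEdges {s(y,x)}).Reachable x z := h2
  rw [side_del_swap] at h2'
  exact hb (h2'.trans h1.symm)

lemma side_x_not_mem {x y : ι} (hT : T.IsTree) (hxy : T.Adj x y) : x ∉ side T x y :=
  fun h => side_not_mem hT hxy h (mem_side_self y x)

/-- All vertices of a walk starting at `y` in `T - xy` lie in `side T x y`. -/
lemma walk_support_side {x y z : ι} {p : (T.deleteEdges {s(x,y)}).Walk y z}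
    {u : ι} (hu : u ∈ p.support) : u ∈ side T x y := by
  classical
  exact ⟨p.takeUntil u hu⟩


/-- A walk of `T` avoiding `x` gives reachability in `T` minus any edge at `x`. -/
lemma reach_del_of_avoid {x y a b : ι} (q : T.Walk a b) (hx : x ∉ q.support) :
    (T.deleteEdges {s(x,y)}).Reachable a b := by
  refine ⟨q.transfer _ ?_⟩
  intro e he
  rw [edgeSet_deleteEdges]
  refine ⟨q.edges_subset_edgeSet he, ?_⟩
  simp only [Set.mem_singleton_iff]
  rintro rfl
  exact hx (q.fst_mem_support_of_mem_edges he)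

/-- Turn a walk in a deleted graph into one of `T` with the same support. -/
lemma reach_del_of_del_avoid {x y a b : ι} {s : Set (Sym2 ι)}
    (q : (T.deleteEdges s).Walk a b) (hx : x ∉ q.support) :
    (T.deleteEdges {s(x,y)}).Reachable a b := by
  have hq : ∀ e ∈ q.edges, e ∈ T.edgeSet := by
    intro e he
    have := q.edges_subset_edgeSet he
    rw [edgeSet_deleteEdges] at this
    exact this.1
  have := reach_del_of_avoid (x := x) (y := y) (q.transfer T hq)
  rw [Walk.support_transfer] at this
  exact this hx

lemma side_subset {x a b : ι} (hT : T.IsTree) (hxa : T.Adj x a) (hxb : T.Adj x b)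
    (hab : a ≠ b) : side T x b ⊆ side T a x := by
  intro z hz
  obtain ⟨w⟩ := hz
  have key : ∀ u, u ∈ side T a x ∧ u ≠ x ∧ u ∈ side T x b →
      ∀ {v}, (T.deleteEdges {s(x,b)}).Adj u v → v ∈ side T a x ∧ v ≠ x ∧ v ∈ side T x b := by
    rintro u ⟨hu1, hu2, hu3⟩ v huv
    rw [deleteEdges_adj, Set.mem_singleton_iff] at huv
    have hv3 : v ∈ side T x b := side_extend hu3 huv.1 huv.2
    have hv2 : v ≠ x := by
      rintro rfl
      exact side_x_not_mem hT hxb hv3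
    have hv1 : v ∈ side T a x := by
      refine side_extend hu1 huv.1 ?_
      intro hc
      rw [Sym2.eq_iff] at hc
      rcases hc with ⟨rfl, rfl⟩ | ⟨rfl, rfl⟩
      · exact hv2 rfl
      · exact hu2 rfl
    exact ⟨hv1, hv2, hv3⟩
  have base : b ∈ side T a x ∧ b ≠ x ∧ b ∈ side T x b := by
    refine ⟨?_, hxb.ne', mem_side_self x b⟩
    refine side_extend (mem_side_self a x) hxb ?_
    intro hc
    rw [Sym2.eq_iff] at hc
    rcases hc with ⟨h1, h2⟩ | ⟨h1, h2⟩
    · exact hxa.ne h1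
    · exact hab h2.symm
  exact (walk_pred (P := fun u => u ∈ side T a x ∧ u ≠ x ∧ u ∈ side T x b)
    (fun u v huv hu => key u hu huv) w base).1

lemma first_step {x a l : ι} (hT : T.IsTree) (hxa : T.Adj x a) (hlx : l ≠ x)
    (hl : l ∈ side T a x) : ∃ y, T.Adj x y ∧ y ≠ a ∧ l ∈ side T x y := by
  classical
  obtain ⟨w⟩ := hl
  obtain ⟨p, hp⟩ : ∃ p : (T.deleteEdges {s(a,x)}).Walk x l, p.IsPath := ⟨w.toPath.1, w.toPath.2⟩
  cases p with
  | nil => exact absurd rfl hlx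
  | @cons _ y _ h q =>
    rw [Walk.cons_isPath_iff] at hp
    rw [deleteEdges_adj, Set.mem_singleton_iff] at h
    have hya : y ≠ a := by
      rintro rfl
      exact h.2 Sym2.eq_swap
    refine ⟨y, h.1, hya, ?_⟩
    exact reach_del_of_del_avoid q hp.2

lemma path_sides {u w : ι} (hT : T.IsTree) (p : T.Walk u w) (hp : p.IsPath) :
    ∀ z ∈ p.support, z ≠ u → z ≠ w →
    ∃ y, T.Adj z y ∧ u ∈ side T z y ∧ w ∈ side T y z := by
  induction p with
  | nil =>
    intro z hz hzu _
    simp only [Walk.support_nil, List.mem_singleton] at hz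
    exact absurd hz hzu
  | @cons u c w h q ih =>
    intro z hz hzu hzw
    rw [Walk.cons_isPath_iff] at hp
    rw [Walk.support_cons, List.mem_cons] at hz
    rcases hz with rfl | hz
    · exact absurd rfl hzu
    by_cases hzc : z = c
    · subst hzc
      refine ⟨u, h.symm, mem_side_self z u, ?_⟩
      exact reach_del_of_avoid q hp.2
    · obtain ⟨y, hy1, hy2, hy3⟩ := ih hp.1 z hz hzc hzw
      refine ⟨y, hy1, ?_, hy3⟩
      refine side_extend hy2 h.symm ?_
      intro hc
      rw [Sym2.eq_iff] at hc
      rcases hc with ⟨rfl, rfl⟩ | ⟨rfl, rfl⟩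
      · exact hzc rfl
      · exact hp.2 hz

end TreeSide

section Counting

variable {α : Type*}

lemma finset_double_count [DecidableEq α] (A B C : Finset α)
    (h : ∀ v ∈ A ∪ B ∪ C, (v ∈ A ∧ v ∈ B) ∨ (v ∈ A ∧ v ∈ C) ∨ (v ∈ B ∧ v ∈ C)) :
    2 * (A ∪ B ∪ C).card ≤ A.card + B.card + C.card := by
  classical
  set f : α → ℕ := fun v =>
    (if v ∈ A then 1 else 0) + (if v ∈ B then 1 else 0) + (if v ∈ C then 1 else 0) with hf
  have h1 : 2 * (A ∪ B ∪ C).card = ∑ _v ∈ A ∪ B ∪ C, 2 := by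
    rw [Finset.sum_const, smul_eq_mul, mul_comm]
  have h2 : ∑ v ∈ A ∪ B ∪ C, 2 ≤ ∑ v ∈ A ∪ B ∪ C, f v := by
    refine Finset.sum_le_sum ?_
    intro v hv
    rcases h v hv with ⟨ha, hb⟩ | ⟨ha, hb⟩ | ⟨ha, hb⟩ <;>
      simp only [hf, ha, hb, if_pos, if_true] <;> split_ifs <;> omega
  have h3 : ∑ v ∈ A ∪ B ∪ C, f v ≤ A.card + B.card + C.card := by
    have hsum : ∀ (D : Finset α), ∑ v ∈ A ∪ B ∪ C, (if v ∈ D then 1 else 0) ≤ D.card := by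
      intro D
      rw [Finset.sum_boole]
      simp only [Nat.cast_id]
      exact Finset.card_le_card (fun x hx => (Finset.mem_filter.1 hx).2)
    calc ∑ v ∈ A ∪ B ∪ C, f v
        = (∑ v ∈ A ∪ B ∪ C, (if v ∈ A then 1 else 0)) +
          (∑ v ∈ A ∪ B ∪ C, (if v ∈ B then 1 else 0)) +
          (∑ v ∈ A ∪ B ∪ C, (if v ∈ C then 1 else 0)) := by
          simp [hf, Finset.sum_add_distrib]
      _ ≤ A.card + B.card + C.card := by
          have := hsum A; have := hsum B; have := hsum C; omega
  omega

lemma set_double_count [Fintype α] (A B C : Set α)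
    (h : ∀ v ∈ A ∪ B ∪ C, (v ∈ A ∧ v ∈ B) ∨ (v ∈ A ∧ v ∈ C) ∨ (v ∈ B ∧ v ∈ C)) :
    2 * (A ∪ B ∪ C).ncard ≤ A.ncard + B.ncard + C.ncard := by
  classical
  have hU : (A ∪ B ∪ C).toFinset = A.toFinset ∪ B.toFinset ∪ C.toFinset := by
    ext v; simp
  rw [Set.ncard_eq_toFinset_card' A, Set.ncard_eq_toFinset_card' B,
    Set.ncard_eq_toFinset_card' C, Set.ncard_eq_toFinset_card' (A ∪ B ∪ C), hU]
  refine finset_double_count _ _ _ ?_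
  intro v hv
  have hv' : v ∈ A ∪ B ∪ C := by
    simp only [Finset.mem_union, Set.mem_toFinset] at hv
    simpa [Set.mem_union] using hv
  rcases h v hv' with ⟨h1, h2⟩ | ⟨h1, h2⟩ | ⟨h1, h2⟩ <;>
    simp [Set.mem_toFinset, h1, h2]

lemma sym2_ncard_le (e : Sym2 α) : {v | v ∈ e}.ncard ≤ 2 := by
  induction e with
  | _ p q =>
    have : {v | v ∈ s(p, q)} = {p, q} := by
      ext v; simp [Sym2.mem_iff]
    rw [this]
    exact (Set.ncard_insert_le _ _).trans (by simp)

end Counting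

section Pendant

variable {ι : Type*} {W : Type*}

/-- The tree `T` with every element of `W` attached as a pendant vertex at `r`. -/
def pend (T : SimpleGraph ι) (r : ι) (W : Type*) : SimpleGraph (ι ⊕ W) where
  Adj a b := match a, b with
    | .inl a, .inl b => T.Adj a b
    | .inl a, .inr _ => a = r
    | .inr _, .inl b => b = r
    | .inr _, .inr _ => False
  symm := by constructor; rintro (a | a) (b | b) h <;> first | exact h.symm | exact h
  loopless := by constructor; rintro (a | a) h <;> first | exact T.loopless.irrefl a h | exact h

variable {T : SimpleGraph ι} {r : ι}

@[simp] lemma pend_adj_inl_inl {a b : ι} :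
    (pend T r W).Adj (Sum.inl a) (Sum.inl b) ↔ T.Adj a b := Iff.rfl

@[simp] lemma pend_adj_inl_inr {a : ι} {w : W} :
    (pend T r W).Adj (Sum.inl a) (Sum.inr w) ↔ a = r := Iff.rfl

@[simp] lemma pend_adj_inr_inl {a : ι} {w : W} :
    (pend T r W).Adj (Sum.inr w) (Sum.inl a) ↔ a = r := Iff.rfl

@[simp] lemma pend_adj_inr_inr {w w' : W} :
    ¬ (pend T r W).Adj (Sum.inr w) (Sum.inr w') := fun h => h

lemma sym2_inl_eq {a b x y : ι} (h : s(x, y) = s(a, b)) :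
    s((Sum.inl x : ι ⊕ W), Sum.inl y) = s(Sum.inl a, Sum.inl b) := by
  rw [Sym2.eq_iff] at h ⊢
  rcases h with ⟨rfl, rfl⟩ | ⟨rfl, rfl⟩
  · exact Or.inl ⟨rfl, rfl⟩
  · exact Or.inr ⟨rfl, rfl⟩

/-- Projection of a walk in a pendant extension minus an inl-edge. -/
lemma pend_proj {a b : ι} :
    ∀ (n : ℕ) (st tt : ι ⊕ W)
      (p : ((pend T r W).deleteEdges {s(Sum.inl a, Sum.inl b)}).Walk st tt),
      p.length ≤ n → ∀ x y : ι, st = Sum.inl x → tt = Sum.inl y →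
      (T.deleteEdges {s(a, b)}).Reachable x y := by
  intro n
  induction n with
  | zero =>
    intro st tt p hp x y hs ht
    cases p with
    | nil =>
      subst hs
      have : x = y := Sum.inl_injective ht
      subst this
      exact Reachable.refl x
    | cons h q => simp at hp
  | succ n ih =>
    intro st tt p hp x y hs ht
    cases p with
    | nil =>
      subst hs
      have : x = y := Sum.inl_injective ht
      subst this
      exact Reachable.refl x
    | @cons _ m _ h q =>
      subst hs
      rw [SimpleGraph.deleteEdges_adj, Set.mem_singleton_iff] at h
      cases m with
      | inl z =>
        have hadj : T.Adj x z := h.1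
        have hne : s(x, z) ≠ s(a, b) := fun hc => h.2 (sym2_inl_eq hc)
        have hr : (T.deleteEdges {s(a, b)}).Adj x z := by simp [hadj, hne]
        have := ih _ _ q (by simpa using Nat.le_of_succ_le_succ (by simpa using hp)) z y rfl ht
        exact hr.reachable.trans this
      | inr u =>
        have hx : x = r := h.1
        cases q with
        | nil => simp at ht
        | @cons _ m2 _ h2 q2 =>
          rw [SimpleGraph.deleteEdges_adj, Set.mem_singleton_iff] at h2
          cases m2 with
          | inl z2 =>
            have hz2 : z2 = r := h2.1
            have hlen : q2.length ≤ n := by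
              simp only [Walk.length_cons] at hp
              omega
            have := ih _ _ q2 hlen z2 y rfl ht
            rw [hx, ← hz2]
            exact this
          | inr u2 => exact absurd h2.1 (by simp [pend])
  
lemma pend_isTree (hT : T.IsTree) (r : ι) : (pend T r W).IsTree := by
  constructor
  · -- connected
    have hreach : ∀ n : ι ⊕ W, (pend T r W).Reachable n (Sum.inl r) := by
      rintro (x | u)
      · exact Reachable.map (⟨Sum.inl, fun h => h⟩ : T →g pend T r W)
          (hT.isConnected.preconnected x r)
      · exact (SimpleGraph.Adj.reachable (by simp : (pend T r W).Adj (Sum.inr u) (Sum.inl r)))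
    have : Nonempty (ι ⊕ W) := ⟨Sum.inl r⟩
    exact ⟨fun u v => (hreach u).trans (hreach v).symm⟩
  · -- acyclic
    rw [isAcyclic_iff_forall_adj_isBridge]
    rintro (a | u) (b | u') hadj
    · rw [SimpleGraph.isBridge_iff]
      intro hr
      have hr' : ((pend T r W).deleteEdges {s(Sum.inl a, Sum.inl b)}).Reachable
          (Sum.inl a) (Sum.inl b) := hr
      have : (T.deleteEdges {s(a, b)}).Reachable a b := by
        obtain ⟨p⟩ := hr'
        exact pend_proj p.length _ _ p le_rfl a b rfl rfl
      exact ((isAcyclic_iff_forall_adj_isBridge.mp hT.2) hadj) this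
    · -- inl a ~ inr u', a = r
      have ha : a = r := hadj
      rw [SimpleGraph.isBridge_iff]
      intro hr
      have hr' : ((pend T r W).deleteEdges {s(Sum.inl a, Sum.inr u')}).Reachable
          (Sum.inl a) (Sum.inr u') := hr
      obtain ⟨p⟩ := hr'.symm
      cases p with
      | @cons _ m _ h q =>
        rw [SimpleGraph.deleteEdges_adj, Set.mem_singleton_iff] at h
        cases m with
        | inl z =>
          have : z = r := h.1
          subst this ha
          exact h.2 Sym2.eq_swap
        | inr u2 => exact h.1
    · -- inr u ~ inl b, b = r
      have hb : b = r := hadj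
      rw [SimpleGraph.isBridge_iff]
      intro hr
      have hr' : ((pend T r W).deleteEdges {s(Sum.inr u, Sum.inl b)}).Reachable
          (Sum.inr u) (Sum.inl b) := hr
      obtain ⟨p⟩ := hr'
      cases p with
      | @cons _ m _ h q =>
        rw [SimpleGraph.deleteEdges_adj, Set.mem_singleton_iff] at h
        cases m with
        | inl z =>
          have : z = r := h.1
          subst this hb
          exact h.2 rfl
        | inr u2 => exact h.1
    · exact absurd hadj (by simp)

end Pendant

section Bags

variable {V : Type} {ι : Type}
variable (G : SimpleGraph V) (T : SimpleGraph ι)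
variable (θ : G.edgeSet ≃ {x : ι // (T.neighborSet x).ncard = 1})

/-- Vertices of `G` with an edge mapped to each side of the `T`-edge `xy`. -/
def midV (x y : ι) : Set V :=
  {v | (∃ e : G.edgeSet, v ∈ e.1 ∧ (θ e).1 ∈ side T x y) ∧
       (∃ e : G.edgeSet, v ∈ e.1 ∧ (θ e).1 ∈ side T y x)}

/-- The bag at node `x`. -/
def bagL (x : ι) : Set V :=
  {v | (∃ y, T.Adj x y ∧ v ∈ midV G T θ x y) ∨ (∃ e : G.edgeSet, (θ e).1 = x ∧ v ∈ e.1)}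

variable {G T θ}

lemma midV_subset_across (hT : T.IsTree) {x y : ι} (hxy : T.Adj x y) :
    midV G T θ x y ⊆ {v | ∃ e₁ e₂ : G.edgeSet, v ∈ e₁.1 ∧ v ∈ e₂.1 ∧
      ¬ (T.deleteEdges {s(x, y)}).Reachable (θ e₁).1 (θ e₂).1} := by
  rintro v ⟨⟨e, hv, hs⟩, ⟨e', hv', hs'⟩⟩
  refine ⟨e, e', hv, hv', ?_⟩
  intro hr
  have hs'' : (T.deleteEdges {s(x, y)}).Reachable x (θ e').1 := by
    have h0 : (T.deleteEdges {s(y, x)}).Reachable x (θ e').1 := hs'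
    rwa [side_del_swap] at h0
  have hmem : (θ e).1 ∈ side T y x := by
    show (T.deleteEdges {s(y, x)}).Reachable x (θ e).1
    rw [side_del_swap]
    exact hs''.trans hr.symm
  exact side_not_mem hT hxy hs hmem

lemma side_leaf {x y : ι} (hx : T.neighborSet x = {y}) : side T y x ⊆ {x} := by
  intro z hz
  obtain ⟨w⟩ := hz
  refine walk_pred (P := fun u => u ∈ ({x} : Set ι)) ?_ w rfl
  intro u u' huu' hu
  simp only [Set.mem_singleton_iff] at hu
  subst hu
  rw [SimpleGraph.deleteEdges_adj, Set.mem_singleton_iff] at huu'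
  have : u' ∈ T.neighborSet u := huu'.1
  rw [hx, Set.mem_singleton_iff] at this
  subst this
  exact absurd Sym2.eq_swap huu'.2

lemma bagL_leaf_subset {x : ι} (hx1 : (T.neighborSet x).ncard = 1) :
    bagL G T θ x ⊆ {v | v ∈ (θ.symm ⟨x, hx1⟩).1} := by
  obtain ⟨y, hy⟩ := Set.ncard_eq_one.mp hx1
  have key : ∀ (e : G.edgeSet), (θ e).1 = x → ∀ v, v ∈ e.1 →
      v ∈ {v | v ∈ (θ.symm ⟨x, hx1⟩).1} := by
    intro e hex v hv
    have he : e = θ.symm ⟨x, hx1⟩ := by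
      have : θ e = ⟨x, hx1⟩ := Subtype.ext hex
      rw [← this, Equiv.symm_apply_apply]
    rwa [← he]
  rintro v (⟨y', hady', ⟨_, ⟨e, hv, hs⟩⟩⟩ | ⟨e, hex, hv⟩)
  · have hy' : y' = y := by
      have : y' ∈ T.neighborSet x := hady'
      rwa [hy, Set.mem_singleton_iff] at this
    subst hy'
    have : (θ e).1 ∈ ({x} : Set ι) := side_leaf hy hs
    exact key e this v hv
  · exact key e hex v hv

lemma bagL_leaf_ncard {x : ι} (hx1 : (T.neighborSet x).ncard = 1) [Fintype V] :
    (bagL G T θ x).ncard ≤ 2 :=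
  le_trans (Set.ncard_le_ncard (bagL_leaf_subset hx1) (Set.toFinite _)) (sym2_ncard_le _)

/-- The key pigeonhole step: a vertex across the edge `xa` at a degree-3 node `x`
is also across `xb` or `xc`. -/
lemma midV_two {x a b c : ι} (hT : T.IsTree) (hx3 : (T.neighborSet x).ncard = 3)
    (hxa : T.Adj x a) (hxb : T.Adj x b) (hxc : T.Adj x c)
    (hab : a ≠ b) (hac : a ≠ c)
    (hnbr : ∀ y, T.Adj x y → y = a ∨ y = b ∨ y = c)
    {v : V} (hv : v ∈ midV G T θ x a) :
    v ∈ midV G T θ x b ∨ v ∈ midV G T θ x c := by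
  obtain ⟨⟨e₁, hv₁, h₁⟩, ⟨e₂, hv₂, h₂⟩⟩ := hv
  have hlx : (θ e₂).1 ≠ x := by
    intro hc
    have := (θ e₂).2
    rw [hc, hx3] at this
    omega
  obtain ⟨y, hxy, hya, hside⟩ := first_step hT hxa hlx h₂
  have h₁' : ∀ y', T.Adj x y' → y' ≠ a → (θ e₁).1 ∈ side T y' x :=
    fun y' hxy' hy'a => side_subset hT hxy' hxa (Ne.symm ((Ne.symm hy'a))) h₁
  rcases hnbr y hxy with rfl | rfl | rfl
  · exact absurd rfl hya
  · exact Or.inl ⟨⟨e₂, hv₂, hside⟩, ⟨e₁, hv₁, h₁' y hxy hya⟩⟩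
  · exact Or.inr ⟨⟨e₂, hv₂, hside⟩, ⟨e₁, hv₁, h₁' y hxy hya⟩⟩

lemma bagL_internal_ncard {x : ι} [Fintype V] (hT : T.IsTree)
    (hx3 : (T.neighborSet x).ncard = 3) {w : ℕ}
    (hw : ∀ y, T.Adj x y → (midV G T θ x y).ncard ≤ w) :
    2 * (bagL G T θ x).ncard ≤ 3 * w := by
  obtain ⟨a, b, c, hab, hac, hbc, hset⟩ := Set.ncard_eq_three.mp hx3
  have hxa : T.Adj x a := by rw [← SimpleGraph.mem_neighborSet, hset]; simp
  have hxb : T.Adj x b := by rw [← SimpleGraph.mem_neighborSet, hset]; simp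
  have hxc : T.Adj x c := by rw [← SimpleGraph.mem_neighborSet, hset]; simp
  have hnbr : ∀ y, T.Adj x y → y = a ∨ y = b ∨ y = c := by
    intro y hy
    have : y ∈ T.neighborSet x := hy
    rw [hset] at this
    simpa using this
  have hbag : bagL G T θ x = midV G T θ x a ∪ midV G T θ x b ∪ midV G T θ x c := by
    ext v
    constructor
    · rintro (⟨y, hxy, hmid⟩ | ⟨e, hex, _⟩)
      · rcases hnbr y hxy with rfl | rfl | rfl
        · exact Or.inl (Or.inl hmid)
        · exact Or.inl (Or.inr hmid)
        · exact Or.inr hmid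
      · have := (θ e).2
        rw [hex, hx3] at this
        omega
    · rintro ((hmid | hmid) | hmid)
      · exact Or.inl ⟨a, hxa, hmid⟩
      · exact Or.inl ⟨b, hxb, hmid⟩
      · exact Or.inl ⟨c, hxc, hmid⟩
  have htwo : ∀ v ∈ midV G T θ x a ∪ midV G T θ x b ∪ midV G T θ x c,
      (v ∈ midV G T θ x a ∧ v ∈ midV G T θ x b) ∨
      (v ∈ midV G T θ x a ∧ v ∈ midV G T θ x c) ∨
      (v ∈ midV G T θ x b ∧ v ∈ midV G T θ x c) := by
    rintro v ((hv | hv) | hv)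
    · rcases midV_two hT hx3 hxa hxb hxc hab hac hnbr hv with h | h
      · exact Or.inl ⟨hv, h⟩
      · exact Or.inr (Or.inl ⟨hv, h⟩)
    · rcases midV_two hT hx3 hxb hxa hxc (Ne.symm hab) hbc
        (fun y hy => (hnbr y hy).elim (fun h => Or.inr (Or.inl h))
          (fun h => h.elim Or.inl (fun h => Or.inr (Or.inr h)))) hv with h | h
      · exact Or.inl ⟨h, hv⟩
      · exact Or.inr (Or.inr ⟨hv, h⟩)
    · rcases midV_two hT hx3 hxc hxa hxb (Ne.symm hac) (Ne.symm hbc)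
        (fun y hy => (hnbr y hy).elim (fun h => Or.inr (Or.inl h))
          (fun h => h.elim (fun h => Or.inr (Or.inr h)) Or.inl)) hv with h | h
      · exact Or.inr (Or.inl ⟨h, hv⟩)
      · exact Or.inr (Or.inr ⟨h, hv⟩)
  rw [hbag]
  calc 2 * (midV G T θ x a ∪ midV G T θ x b ∪ midV G T θ x c).ncard
      ≤ (midV G T θ x a).ncard + (midV G T θ x b).ncard + (midV G T θ x c).ncard :=
        set_double_count _ _ _ htwo
    _ ≤ 3 * w := by
        have := hw a hxa; have := hw b hxb; have := hw c hxc; omega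

end Bags

section Connectivity

variable {V : Type} {ι : Type}
variable {G : SimpleGraph V} {T : SimpleGraph ι}
variable {θ : G.edgeSet ≃ {x : ι // (T.neighborSet x).ncard = 1}}

lemma reach_induce {s : Set ι} :
    ∀ {a b : ι} (w : T.Walk a b), (∀ z ∈ w.support, z ∈ s) →
    ∀ (ha : a ∈ s) (hb : b ∈ s), (T.induce s).Reachable ⟨a, ha⟩ ⟨b, hb⟩ := by
  intro a b w
  induction w with
  | nil => intro _ ha hb; exact Reachable.refl _
  | @cons a c b h q ih =>
    intro hsup ha hb
    have hc : c ∈ s := hsup c (by simp)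
    have hadj : (T.induce s).Adj ⟨a, ha⟩ ⟨c, hc⟩ := by
      exact h
    exact hadj.reachable.trans (ih (fun z hz => hsup z (by simp [hz])) hc hb)

/-- If `v` lies on an edge `e` of `G`, the leaf `θ e` is in `v`'s bag-node set. -/
lemma leaf_mem_bag (e : G.edgeSet) {v : V} (hv : v ∈ e.1) :
    v ∈ bagL G T θ (θ e).1 :=
  Or.inr ⟨e, rfl, hv⟩

/-- Leaf-to-leaf connectivity inside the bag-node set. -/
lemma leaf_leaf_reach (hT : T.IsTree) {v : V} (e₁ e₂ : G.edgeSet)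
    (hv₁ : v ∈ e₁.1) (hv₂ : v ∈ e₂.1) :
    (T.induce {x | v ∈ bagL G T θ x}).Reachable
      ⟨(θ e₁).1, leaf_mem_bag e₁ hv₁⟩ ⟨(θ e₂).1, leaf_mem_bag e₂ hv₂⟩ := by
  classical
  obtain ⟨p0⟩ := hT.isConnected.preconnected (θ e₁).1 (θ e₂).1
  obtain ⟨p, hp⟩ : ∃ p : T.Walk (θ e₁).1 (θ e₂).1, p.IsPath := ⟨p0.toPath.1, p0.toPath.2⟩
  refine reach_induce p ?_ _ _
  intro z hz
  by_cases hz1 : z = (θ e₁).1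
  · subst hz1; exact leaf_mem_bag e₁ hv₁
  by_cases hz2 : z = (θ e₂).1
  · subst hz2; exact leaf_mem_bag e₂ hv₂
  obtain ⟨y, hzy, hs1, hs2⟩ := path_sides hT p hp z hz hz1 hz2
  exact Or.inl ⟨y, hzy, ⟨e₁, hv₁, hs1⟩, ⟨e₂, hv₂, hs2⟩⟩

/-- Every bag node reaches a leaf node of `v` inside the bag-node set. -/
lemma bag_to_leaf_reach (hT : T.IsTree) {v : V} {x : ι} (hx : v ∈ bagL G T θ x) :
    ∃ (e : G.edgeSet) (hv : v ∈ e.1),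
      (T.induce {x | v ∈ bagL G T θ x}).Reachable ⟨x, hx⟩ ⟨(θ e).1, leaf_mem_bag e hv⟩ := by
  classical
  rcases hx with ⟨y, hxy, ⟨⟨e₁, hv₁, h₁⟩, ⟨e₂, hv₂, h₂⟩⟩⟩ | ⟨e, hex, hv⟩
  case inr =>
    refine ⟨e, hv, ?_⟩
    have : (⟨x, Or.inr ⟨e, hex, hv⟩⟩ : {z // z ∈ {x | v ∈ bagL G T θ x}}) =
        ⟨(θ e).1, leaf_mem_bag e hv⟩ := by
      exact Subtype.ext hex.symm
    rw [← this]
  case inl =>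
    -- h₂ : (θ e₂).1 ∈ side T y x, i.e. reachable from x in T - xy
    refine ⟨e₂, hv₂, ?_⟩
    have h₂' : (T.deleteEdges {s(x, y)}).Reachable x (θ e₂).1 := by
      have h0 : (T.deleteEdges {s(y, x)}).Reachable x (θ e₂).1 := h₂
      rwa [side_del_swap] at h0
    obtain ⟨q0⟩ := h₂'
    obtain ⟨q, hq⟩ : ∃ q : (T.deleteEdges {s(x, y)}).Walk x (θ e₂).1, q.IsPath :=
      ⟨q0.toPath.1, q0.toPath.2⟩
    have hqe : ∀ f ∈ q.edges, f ∈ T.edgeSet := by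
      intro f hf
      have := q.edges_subset_edgeSet hf
      rw [SimpleGraph.edgeSet_deleteEdges] at this
      exact this.1
    have hsupp : (q.transfer T hqe).support = q.support := Walk.support_transfer _ _
    have hqT : (q.transfer T hqe).IsPath := by
      rw [Walk.isPath_def, hsupp]
      exact hq.support_nodup
    refine reach_induce (q.transfer T hqe) ?_ (Or.inl ⟨y, hxy, ⟨e₁, hv₁, h₁⟩, ⟨e₂, hv₂, h₂⟩⟩)
      (leaf_mem_bag e₂ hv₂)
    intro z hz
    rw [hsupp] at hz
    by_cases hz1 : z = x
    · subst hz1; exact Or.inl ⟨y, hxy, ⟨e₁, hv₁, h₁⟩, ⟨e₂, hv₂, h₂⟩⟩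
    by_cases hz2 : z = (θ e₂).1
    · subst hz2; exact leaf_mem_bag e₂ hv₂
    -- z is internal on the path from x to the leaf of e₂
    obtain ⟨y₀, hzy₀, hxs, hl₂s⟩ := path_sides hT (q.transfer T hqe) hqT z (hsupp ▸ hz) hz1 hz2
    -- z lies on the x-side of the edge xy
    have hzside : z ∈ side T y x := by
      show (T.deleteEdges {s(y, x)}).Reachable x z
      rw [side_del_swap]
      exact ⟨q.takeUntil z hz⟩
    have hyz : y ≠ z := by
      rintro rfl
      exact side_not_mem hT hxy (mem_side_self x y) hzside
    -- y is on the y₀-side of the edge z y₀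
    have hyside : y ∈ side T z y₀ := by
      refine side_extend hxs hxy ?_
      intro hc
      rw [Sym2.eq_iff] at hc
      rcases hc with ⟨rfl, rfl⟩ | ⟨rfl, rfl⟩
      · exact hz1 rfl
      · exact hyz rfl
    -- the leaf of e₁ is on the y₀-side of the edge z y₀
    have hl₁ : (θ e₁).1 ∈ side T z y₀ := by
      obtain ⟨rwalk⟩ := h₁
      have hzr : z ∉ rwalk.support := by
        intro hzr
        exact side_not_mem hT hxy (walk_support_side hzr) hzside
      exact hyside.trans (reach_del_of_del_avoid rwalk hzr)
    exact Or.inl ⟨y₀, hzy₀, ⟨e₁, hv₁, hl₁⟩, ⟨e₂, hv₂, hl₂s⟩⟩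

/-- Connectivity of the set of bag nodes of a non-isolated vertex. -/
lemma bag_nodes_connected (hT : T.IsTree) {v : V} (e₀ : G.edgeSet) (hv₀ : v ∈ e₀.1) :
    (T.induce {x | v ∈ bagL G T θ x}).Connected := by
  have hne : Nonempty {x | v ∈ bagL G T θ x} := ⟨⟨(θ e₀).1, leaf_mem_bag e₀ hv₀⟩⟩
  refine ⟨fun a b => ?_⟩
  obtain ⟨x, hx⟩ := a
  obtain ⟨x', hx'⟩ := b
  obtain ⟨e, hv, hr⟩ := bag_to_leaf_reach hT hx
  obtain ⟨e', hv', hr'⟩ := bag_to_leaf_reach hT hx'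
  exact (hr.trans (leaf_leaf_reach hT e e' hv hv')).trans hr'.symm

end Connectivity


/-- if bw(G) ≥ 2 then tw(G) + 1 ≤ (3/2)·bw(G). -/
theorem treewidth_le_branchwidth {V : Type} [Fintype V] (G : SimpleGraph V)
    (h : 2 ≤ branchwidth G) :
    2 * (treewidth G + 1) ≤ 3 * branchwidth G := by
  classical
  have hne : {w | HasBDWidthLE G w}.Nonempty := by
    by_contra hc
    rw [Set.not_nonempty_iff_eq_empty] at hc
    rw [branchwidth, hc, Nat.sInf_empty] at h
    omega
  have hmem : HasBDWidthLE G (branchwidth G) := Nat.sInf_mem hne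
  set w := branchwidth G with hwdef
  obtain ⟨ι, hfin, T, hT, hdeg, θ, hwidth⟩ := hmem
  have hni : Nonempty ι := hT.isConnected.nonempty
  obtain ⟨r⟩ := hni
  set B : ι ⊕ V → Set V := fun n =>
    Sum.rec (fun x => bagL G T θ x) (fun u => {z | z = u ∧ ∀ e : G.edgeSet, u ∉ e.1}) n with hB
  have hmid : ∀ {x y : ι}, T.Adj x y → (midV G T θ x y).ncard ≤ w := by
    intro x y hxy
    exact le_trans (Set.ncard_le_ncard (midV_subset_across hT hxy) (Set.toFinite _))
      (hwidth x y hxy)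
  have htd : HasTDWidthLE G (3 * w / 2 - 1) := by
    refine ⟨ι ⊕ V, pend T r V, B, ⟨pend_isTree hT r, ?_, ?_⟩, ?_⟩
    · intro v v' hadj
      have he : s(v, v') ∈ G.edgeSet := hadj
      refine ⟨Sum.inl (θ ⟨s(v,v'), he⟩).1, ?_, ?_⟩
      · exact Or.inr ⟨⟨s(v,v'), he⟩, rfl, Sym2.mem_mk_left v v'⟩
      · exact Or.inr ⟨⟨s(v,v'), he⟩, rfl, Sym2.mem_mk_right v v'⟩
    · intro v
      by_cases hiso : ∃ e : G.edgeSet, v ∈ e.1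
      · obtain ⟨e₀, hv₀⟩ := hiso
        have hsets : {n : ι ⊕ V | v ∈ B n} = Sum.inl '' {x | v ∈ bagL G T θ x} := by
          ext n
          cases n with
          | inl x =>
            simp only [hB, Set.mem_setOf_eq, Set.mem_image]
            constructor
            · intro hx; exact ⟨x, hx, rfl⟩
            · rintro ⟨x', hx', hx⟩
              have : x' = x := Sum.inl_injective hx
              subst this; exact hx'
          | inr u =>
            simp only [hB, Set.mem_setOf_eq, Set.mem_image]
            constructor
            · rintro ⟨rfl, hu⟩; exact absurd hv₀ (hu e₀)
            · rintro ⟨x, _, hx⟩; exact absurd hx (by simp)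
        rw [hsets]
        have hconn := bag_nodes_connected (θ := θ) hT e₀ hv₀
        exact hconn.map
          (⟨fun p => ⟨Sum.inl p.1, ⟨p.1, p.2, rfl⟩⟩, fun {p q} hpq => hpq⟩ :
            (T.induce {x | v ∈ bagL G T θ x}) →g
            ((pend T r V).induce (Sum.inl '' {x | v ∈ bagL G T θ x})))
          (by rintro ⟨n, ⟨x, hx, rfl⟩⟩; exact ⟨⟨x, hx⟩, rfl⟩)
      · push_neg at hiso
        have hsets : {n : ι ⊕ V | v ∈ B n} = {Sum.inr v} := by
          ext n
          cases n with
          | inl x =>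
            simp only [hB, Set.mem_setOf_eq, Set.mem_singleton_iff]
            constructor
            · rintro (⟨y, _, ⟨⟨e, hv, _⟩, _⟩⟩ | ⟨e, _, hv⟩)
              · exact absurd hv (hiso e)
              · exact absurd hv (hiso e)
            · intro hc; exact absurd hc (by simp)
          | inr u =>
            simp only [hB, Set.mem_setOf_eq, Set.mem_singleton_iff]
            constructor
            · rintro ⟨rfl, _⟩; rfl
            · intro hc
              have : u = v := Sum.inr_injective hc
              subst this
              exact ⟨rfl, hiso⟩
        rw [hsets]
        have hne2 : Nonempty ({Sum.inr v} : Set (ι ⊕ V)) := ⟨⟨Sum.inr v, rfl⟩⟩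
        refine ⟨fun a b => ?_⟩
        have : a = b := Subtype.ext (a.2.trans b.2.symm)
        rw [this]
    · intro n
      have hgoal : 3 * w / 2 - 1 + 1 = 3 * w / 2 := by omega
      rw [hgoal]
      cases n with
      | inl x =>
        show (bagL G T θ x).ncard ≤ 3 * w / 2
        rcases hdeg x with h3 | h1
        · have := bagL_internal_ncard (θ := θ) hT h3 (fun y hy => hmid hy)
          omega
        · have := bagL_leaf_ncard (G := G) (θ := θ) h1
          omega
      | inr u =>
        show ({z | z = u ∧ ∀ e : G.edgeSet, u ∉ e.1}).ncard ≤ 3 * w / 2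
        have hsub : {z | z = u ∧ ∀ e : G.edgeSet, u ∉ e.1} ⊆ {u} := fun z hz => hz.1
        have h1 := Set.ncard_le_ncard hsub (Set.toFinite _)
        rw [Set.ncard_singleton] at h1
        omega
  have htw : treewidth G ≤ 3 * w / 2 - 1 := Nat.sInf_le htd
  omega


end TWPaper
end

section
/- For every graph G, ltp(G) - 1 <= tw(G) <= 2·ltp(G) - 1, where ltp(G) is the minimum k such that G is a minor of T[K_k] for some tree T. -/
open SimpleGraph

namespace TWPaper

section TreeHelpers

variable {α : Type*} {T : SimpleGraph α}

lemma length_eq_dist (hT : T.IsTree) {x y : α} {p : T.Walk x y} (hp : p.IsPath) :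
    p.length = T.dist x y := by
  classical
  refine le_antisymm ?_ (SimpleGraph.dist_le p)
  obtain ⟨q, hq⟩ := (hT.isConnected x y).exists_walk_length_eq_dist
  have h1 : q.bypass = p := (hT.existsUnique_path x y).unique q.bypass_isPath hp
  calc p.length = q.bypass.length := by rw [h1]
    _ ≤ q.length := q.length_bypass_le
    _ = T.dist x y := hq

lemma notMem_support_of_dist (hT : T.IsTree) {x y r : α} {p : T.Walk y r} (hp : p.IsPath)
    (hx : p.length < T.dist x r) : x ∉ p.support := by
  classical
  intro hmem
  have hd : (p.dropUntil x hmem).IsPath := hp.dropUntil hmem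
  have h1 := length_eq_dist hT hd
  have h2 := p.length_dropUntil_le hmem
  omega

lemma down_unique (hT : T.IsTree) {x r y₁ y₂ : α}
    (h₁ : T.Adj x y₁) (h₂ : T.Adj x y₂)
    (d₁ : T.dist y₁ r < T.dist x r) (d₂ : T.dist y₂ r < T.dist x r) : y₁ = y₂ := by
  obtain ⟨p₁, hp₁, -⟩ := hT.existsUnique_path y₁ r
  obtain ⟨p₂, hp₂, -⟩ := hT.existsUnique_path y₂ r
  have l₁ : p₁.length = T.dist y₁ r := length_eq_dist hT hp₁
  have l₂ : p₂.length = T.dist y₂ r := length_eq_dist hT hp₂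
  have nx₁ : x ∉ p₁.support := notMem_support_of_dist hT hp₁ (by omega)
  have nx₂ : x ∉ p₂.support := notMem_support_of_dist hT hp₂ (by omega)
  have q₁ : (Walk.cons h₁ p₁).IsPath := hp₁.cons nx₁
  have q₂ : (Walk.cons h₂ p₂).IsPath := hp₂.cons nx₂
  have heq := (hT.existsUnique_path x r).unique q₁ q₂
  have h3 := congrArg (fun w : T.Walk x r => w.getVert 1) heq
  simpa [SimpleGraph.Walk.getVert] using h3

lemma adj_dist_ne (hT : T.IsTree) {a b : α} (r : α) (h : T.Adj a b) :
    T.dist a r ≠ T.dist b r := by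
  classical
  intro he
  obtain ⟨pb, hpb, -⟩ := hT.existsUnique_path b r
  have lb : pb.length = T.dist b r := length_eq_dist hT hpb
  by_cases ha : a ∈ pb.support
  · have hd : (pb.dropUntil a ha).IsPath := hpb.dropUntil ha
    have ld : (pb.dropUntil a ha).length = T.dist a r := length_eq_dist hT hd
    have hsplit : (pb.takeUntil a ha).length + (pb.dropUntil a ha).length = pb.length := by
      rw [← SimpleGraph.Walk.length_append, pb.take_spec ha]
    have ht1 : (pb.takeUntil a ha).length ≠ 0 := by
      intro h0
      exact h.ne' (SimpleGraph.Walk.eq_of_length_eq_zero h0)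
    omega
  · have hc : (Walk.cons h pb).IsPath := hpb.cons ha
    have := length_eq_dist hT hc
    simp only [SimpleGraph.Walk.length_cons] at this
    omega

lemma exists_down (hT : T.IsTree) {x r : α} (hx : x ≠ r) :
    ∃ y, T.Adj x y ∧ T.dist y r < T.dist x r := by
  obtain ⟨p, hp, -⟩ := hT.existsUnique_path x r
  cases p with
  | nil => exact absurd rfl hx
  | @cons _ c _ h q =>
    refine ⟨c, h, ?_⟩
    have hq : q.IsPath := ((SimpleGraph.Walk.cons_isPath_iff h q).mp hp).1
    have h1 := length_eq_dist hT hp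
    have h2 := length_eq_dist hT hq
    simp only [SimpleGraph.Walk.length_cons] at h1
    omega

lemma reach_mono {s t : Set α} (hst : s ⊆ t) {x y : ↥s}
    (h : (T.induce s).Reachable x y) :
    (T.induce t).Reachable ⟨x.1, hst x.2⟩ ⟨y.1, hst y.2⟩ := by
  obtain ⟨w⟩ := h
  induction w with
  | nil => rfl
  | @cons a c b hadj q ih =>
    have h1 : (T.induce t).Adj ⟨a.1, hst a.2⟩ ⟨c.1, hst c.2⟩ := hadj
    exact h1.reachable.trans ih

end TreeHelpers

lemma botTree : (⊥ : SimpleGraph PUnit).IsTree := by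
  constructor
  · haveI : Nonempty PUnit := ⟨PUnit.unit⟩
    exact ⟨fun u v => by rw [Subsingleton.elim u v]⟩
  · intro v c hc
    cases c with
    | nil => exact SimpleGraph.Walk.IsCycle.not_of_nil hc
    | cons h q => exact absurd h (by simp)

lemma trivialTD {V : Type} [Fintype V] (G : SimpleGraph V) :
    HasTDWidthLE G (Fintype.card V) := by
  refine ⟨PUnit, ⊥, fun _ => Set.univ, ⟨botTree, fun v w _ => ⟨PUnit.unit, trivial, trivial⟩,
    fun v => ?_⟩, fun x => by simp [Set.ncard_univ]⟩
  haveI : Nonempty ↥{x : PUnit | v ∈ (Set.univ : Set V)} := ⟨⟨PUnit.unit, trivial⟩⟩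
  refine ⟨fun a b => ?_⟩
  have h : a = b := Subtype.ext (Subsingleton.elim a.1 b.1)
  rw [h]

def modelSet {V ι : Type*} {K : ℕ} (B : ι → Set V) (σ : ∀ x, ↥(B x) → Fin K) (v : V) :
    Set (ι × Fin K) :=
  {p | ∃ h : v ∈ B p.1, p.2 = σ p.1 ⟨v, h⟩}

lemma ltp_le_tw {V : Type} [Fintype V] (G : SimpleGraph V) : ltp G ≤ treewidth G + 1 := by
  classical
  have htw : HasTDWidthLE G (treewidth G) := Nat.sInf_mem (s := {k | HasTDWidthLE G k}) ⟨_, trivialTD G⟩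
  obtain ⟨ι, T, B, ⟨hTree, hedge, hconn⟩, hsize⟩ := htw
  set K := treewidth G + 1 with hK
  have hemb : ∀ x : ι, ∃ g : (B x) → Fin K, Function.Injective g := by
    intro x
    have hfin : (B x).Finite := Set.toFinite _
    haveI : Fintype (B x) := hfin.fintype
    have hcard : Fintype.card (B x) ≤ K := by
      have h1 : (B x).ncard = Fintype.card (B x) := by
        rw [← Nat.card_coe_set_eq, Nat.card_eq_fintype_card]
      have := hsize x
      omega
    obtain ⟨e⟩ : Nonempty (↥(B x) ↪ Fin K) :=
      Function.Embedding.nonempty_of_card_le (by simpa using hcard)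
    exact ⟨e, e.injective⟩
  choose σ hσ using hemb
  have canonMem : ∀ (v : V) (x : ι) (h : v ∈ B x), (x, σ x ⟨v, h⟩) ∈ modelSet B σ v :=
    fun v x h => ⟨h, rfl⟩
  have hmem : K ∈ {k | ∃ (ι : Type) (T : SimpleGraph ι), T.IsTree ∧ IsMinor G (treeLex T k)} := by
    refine ⟨ι, T, hTree, modelSet B σ, ?_, ?_, ?_⟩
    · intro v
      have hc := hconn v
      haveI hne : Nonempty ↥(modelSet B σ v) := by
        obtain ⟨⟨x, hx⟩⟩ := hc.nonempty
        exact ⟨⟨_, canonMem v x hx⟩⟩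
      have key : ∀ (a b : ↥{x | v ∈ B x}) (w : (T.induce {x | v ∈ B x}).Walk a b),
          ((treeLex T K).induce (modelSet B σ v)).Reachable
            ⟨_, canonMem v a.1 a.2⟩ ⟨_, canonMem v b.1 b.2⟩ := by
        intro a b w
        induction w with
        | nil => exact Reachable.refl _
        | @cons a c b hadj q ih =>
          have h1 : ((treeLex T K).induce (modelSet B σ v)).Adj
              ⟨_, canonMem v a.1 a.2⟩ ⟨_, canonMem v c.1 c.2⟩ := Or.inl hadj
          exact h1.reachable.trans ih
      refine ⟨?_⟩
      rintro ⟨⟨x, i⟩, hx, hi⟩ ⟨⟨y, j⟩, hy, hj⟩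
      have e1 : (⟨(x, i), ⟨hx, hi⟩⟩ : ↥(modelSet B σ v)) = ⟨_, canonMem v x hx⟩ :=
        Subtype.ext (Prod.ext_iff.mpr ⟨rfl, hi⟩)
      have e2 : (⟨(y, j), ⟨hy, hj⟩⟩ : ↥(modelSet B σ v)) = ⟨_, canonMem v y hy⟩ :=
        Subtype.ext (Prod.ext_iff.mpr ⟨rfl, hj⟩)
      rw [e1, e2]
      obtain ⟨w⟩ := hc.preconnected ⟨x, hx⟩ ⟨y, hy⟩
      exact key ⟨x, hx⟩ ⟨y, hy⟩ w
    · intro a b hab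
      rw [Set.disjoint_left]
      rintro ⟨x, i⟩ ⟨ha1, hi⟩ ⟨hb1, hb2⟩
      have : σ x ⟨a, ha1⟩ = σ x ⟨b, hb1⟩ := (show i = _ from hi).symm.trans hb2
      exact hab (congrArg Subtype.val (hσ x this))
    · intro a b hab
      obtain ⟨x, hax, hbx⟩ := hedge a b hab
      exact ⟨(x, σ x ⟨a, hax⟩), canonMem a x hax, (x, σ x ⟨b, hbx⟩), canonMem b x hbx,
        Or.inr ⟨rfl, fun hcon => hab.ne (congrArg Subtype.val (hσ x hcon))⟩⟩
  exact Nat.sInf_le hmem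

lemma ltpSet_nonempty {V : Type} [Fintype V] (G : SimpleGraph V) :
    ∃ (ι : Type) (T : SimpleGraph ι), T.IsTree ∧ IsMinor G (treeLex T (Fintype.card V)) := by
  classical
  refine ⟨PUnit, ⊥, botTree, ?_⟩
  let e := Fintype.equivFin V
  refine ⟨fun v => {(PUnit.unit, e v)}, ?_, ?_, ?_⟩
  · intro w
    haveI : Nonempty ↥({(PUnit.unit, e w)} : Set (PUnit × Fin (Fintype.card V))) :=
      ⟨⟨(PUnit.unit, e w), rfl⟩⟩
    refine ⟨?_⟩
    rintro ⟨p, hp⟩ ⟨q, hq⟩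
    simp only [Set.mem_singleton_iff] at hp hq
    subst hp; subst hq; rfl
  · intro a b hab
    simp only [Set.disjoint_singleton_left, Set.mem_singleton_iff]
    intro h
    exact hab (e.injective (by simpa using congrArg Prod.snd h))
  · intro a b hab
    exact ⟨(PUnit.unit, e a), rfl, (PUnit.unit, e b), rfl,
      Or.inr ⟨rfl, fun h => hab.ne (e.injective h)⟩⟩

theorem tw_le_ltp {V : Type} [Fintype V] (G : SimpleGraph V) :
    treewidth G ≤ 2 * ltp G - 1 := by
  classical
  have hne : {k | ∃ (ι : Type) (T : SimpleGraph ι), T.IsTree ∧ IsMinor G (treeLex T k)}.Nonempty :=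
    ⟨Fintype.card V, ltpSet_nonempty G⟩
  have hmem : ∃ (ι : Type) (T : SimpleGraph ι), T.IsTree ∧ IsMinor G (treeLex T (ltp G)) :=
    Nat.sInf_mem hne
  obtain ⟨ι, T, hTree, f, hconn, hdisj, hadj⟩ := hmem
  rcases isEmpty_or_nonempty V with hV | hV
  · have h0 : Fintype.card V = 0 := Fintype.card_eq_zero
    have := Nat.sInf_le (s := {k | HasTDWidthLE G k}) (m := 0) (h0 ▸ trivialTD G : HasTDWidthLE G 0)
    exact le_trans this (Nat.zero_le _)
  · obtain ⟨v0⟩ := hV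
    have hk1 : 1 ≤ ltp G := by
      obtain ⟨⟨⟨x, i⟩, hx⟩⟩ := (hconn v0).nonempty
      have := i.2
      omega
    haveI hrne : Nonempty ι := hTree.isConnected.nonempty
    let r : ι := Classical.arbitrary ι
    let P : ι → ι := fun x => if hx : x = r then r else (exists_down hTree hx).choose
    have hP : ∀ x, x ≠ r → T.Adj x (P x) ∧ T.dist (P x) r < T.dist x r := by
      intro x hx
      simp only [P, dif_neg hx]
      exact (exists_down hTree hx).choose_spec
    have hPadj : ∀ a b, T.Adj a b → (a ≠ r ∧ P a = b) ∨ (b ≠ r ∧ P b = a) := by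
      intro a b hab
      have hne' := adj_dist_ne hTree r hab
      rcases Nat.lt_or_ge (T.dist b r) (T.dist a r) with hlt | hge
      · have har : a ≠ r := by
          intro h; subst h; simp [SimpleGraph.dist_self] at hlt
        exact Or.inl ⟨har, down_unique hTree (hP a har).1 hab (hP a har).2 hlt⟩
      · have hlt' : T.dist a r < T.dist b r := by omega
        have hbr : b ≠ r := by
          intro h; subst h; simp [SimpleGraph.dist_self] at hlt'
        exact Or.inr ⟨hbr, down_unique hTree (hP b hbr).1 hab.symm (hP b hbr).2 hlt'⟩
    set S : V → Set ι := fun v => {x | ∃ i, (x, i) ∈ f v} with hS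
    set B' : ι → Set V := fun x => {v | x ∈ S v ∨ (x ≠ r ∧ P x ∈ S v)} with hB'
    have hSne : ∀ v, (S v).Nonempty := by
      intro v
      obtain ⟨⟨⟨x, i⟩, hx⟩⟩ := (hconn v).nonempty
      exact ⟨x, i, hx⟩
    have hSkey : ∀ v (a b : ↥(f v)) (w : ((treeLex T (ltp G)).induce (f v)).Walk a b),
        (T.induce (S v)).Reachable ⟨a.1.1, a.1.2, a.2⟩ ⟨b.1.1, b.1.2, b.2⟩ := by
      intro v a b w
      induction w with
      | nil => rfl
      | @cons a c b hadj' q ih =>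
        rcases hadj' with hT' | ⟨heq, -⟩
        · have h1 : (T.induce (S v)).Adj ⟨a.1.1, a.1.2, a.2⟩ ⟨c.1.1, c.1.2, c.2⟩ := hT'
          exact h1.reachable.trans ih
        · have h2 : (⟨a.1.1, a.1.2, a.2⟩ : ↥(S v)) = ⟨c.1.1, c.1.2, c.2⟩ := Subtype.ext heq
          rw [h2]; exact ih
    have hSconn : ∀ v, (T.induce (S v)).Connected := by
      intro v
      obtain ⟨x0, i0, h0⟩ := hSne v
      haveI : Nonempty ↥(S v) := ⟨⟨x0, i0, h0⟩⟩
      refine ⟨?_⟩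
      rintro ⟨x, i, hx⟩ ⟨y, j, hy⟩
      obtain ⟨w⟩ := (hconn v).preconnected ⟨(x, i), hx⟩ ⟨(y, j), hy⟩
      exact hSkey v _ _ w
    refine Nat.sInf_le (⟨ι, T, B', ⟨hTree, ?_, ?_⟩, ?_⟩ : HasTDWidthLE G (2 * ltp G - 1))
    · -- edges
      intro v w hvw
      obtain ⟨u, hu, u', hu', huu⟩ := hadj v w hvw
      rcases huu with hT' | ⟨heq, -⟩
      · rcases hPadj _ _ hT' with ⟨hr, hp⟩ | ⟨hr, hp⟩
        · exact ⟨u.1, Or.inl ⟨u.2, hu⟩, Or.inr ⟨hr, by rw [hp]; exact ⟨u'.2, hu'⟩⟩⟩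
        · exact ⟨u'.1, Or.inr ⟨hr, by rw [hp]; exact ⟨u.2, hu⟩⟩, Or.inl ⟨u'.2, hu'⟩⟩
      · exact ⟨u.1, Or.inl ⟨u.2, hu⟩, Or.inl (by rw [heq]; exact ⟨u'.2, hu'⟩)⟩
    · -- connectivity of bagsets
      intro v
      have hsub : S v ⊆ {x | v ∈ B' x} := fun x hx => Or.inl hx
      obtain ⟨x0, hx0⟩ := hSne v
      haveI : Nonempty ↥{x | v ∈ B' x} := ⟨⟨x0, Or.inl hx0⟩⟩
      refine ⟨?_⟩
      have step : ∀ x (hx : v ∈ B' x), ∃ y, ∃ hy : y ∈ S v,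
          (T.induce {z | v ∈ B' z}).Reachable ⟨x, hx⟩ ⟨y, hsub hy⟩ := by
        intro x hx
        rcases hx with hx' | ⟨hxr, hpx⟩
        · exact ⟨x, hx', Reachable.refl _⟩
        · refine ⟨P x, hpx, ?_⟩
          have hadjxy : (T.induce {z | v ∈ B' z}).Adj ⟨x, Or.inr ⟨hxr, hpx⟩⟩ ⟨P x, hsub hpx⟩ :=
            (hP x hxr).1
          exact hadjxy.reachable
      rintro ⟨x, hx⟩ ⟨y, hy⟩
      obtain ⟨x', hx', rx⟩ := step x hx
      obtain ⟨y', hy', ry⟩ := step y hy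
      have hmid : (T.induce (S v)).Reachable ⟨x', hx'⟩ ⟨y', hy'⟩ := (hSconn v).preconnected _ _
      exact (rx.trans (reach_mono hsub hmid)).trans ry.symm
    · -- sizes
      intro x
      have hkpos : 0 < ltp G := hk1
      have hle : (B' x).ncard ≤ (Set.univ : Set (Fin 2 × Fin (ltp G))).ncard := by
        refine Set.ncard_le_ncard_of_injOn
          (fun v => if h : x ∈ S v then ((0 : Fin 2), h.choose)
            else ((1 : Fin 2), if h2 : P x ∈ S v then h2.choose else ⟨0, hkpos⟩))
          (fun a _ => trivial) ?_ (Set.toFinite _)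
        intro a ha b hb hab
        by_cases h1 : x ∈ S a <;> by_cases h2 : x ∈ S b
        · simp only [dif_pos h1, dif_pos h2, Prod.mk.injEq] at hab
          obtain ⟨-, hi⟩ := hab
          by_contra hne'
          exact (Set.disjoint_left.mp (hdisj a b hne') h1.choose_spec) (hi ▸ h2.choose_spec)
        · simp only [dif_pos h1, dif_neg h2, Prod.mk.injEq] at hab
          exact absurd hab.1 (by decide)
        · simp only [dif_neg h1, dif_pos h2, Prod.mk.injEq] at hab
          exact absurd hab.1 (by decide)
        · have ha' : P x ∈ S a := by
            rcases ha with h | ⟨-, h⟩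
            · exact absurd h h1
            · exact h
          have hb' : P x ∈ S b := by
            rcases hb with h | ⟨-, h⟩
            · exact absurd h h2
            · exact h
          simp only [dif_neg h1, dif_neg h2, dif_pos ha', dif_pos hb', Prod.mk.injEq] at hab
          obtain ⟨-, hi⟩ := hab
          by_contra hne'
          exact (Set.disjoint_left.mp (hdisj a b hne') ha'.choose_spec) (hi ▸ hb'.choose_spec)
      have huniv : (Set.univ : Set (Fin 2 × Fin (ltp G))).ncard = 2 * ltp G := by
        simp [Set.ncard_univ, Nat.card_eq_fintype_card]
      omega


/-- ltp(G) - 1 ≤ tw(G) ≤ 2·ltp(G) - 1. -/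
theorem ltp_treewidth_bounds {V : Type} [Fintype V] (G : SimpleGraph V) :
    ltp G - 1 ≤ treewidth G ∧ treewidth G ≤ 2 * ltp G - 1 := by
  have h1 := ltp_le_tw G
  exact ⟨by omega, tw_le_ltp G⟩

end TWPaper
end

section
/- A set S of vertices of a graph G is well-linked if and only if S is externally-well-linked. -/
open SimpleGraph

namespace TWPaper

/-- `S` is well-linked iff `S` is externally-well-linked. -/
theorem wellLinked_iff_externallyWellLinked {V : Type} [Fintype V]
    (G : SimpleGraph V) (S : Set V) :
    WellLinked G S ↔ ExternallyWellLinked G S := by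
  classical
  constructor
  · intro hWL A B hA hB hcard
    set C : Finset V := S.toFinset \ (A ∪ B) with hCdef
    set A' : Finset V := A ∪ C with hA'def
    set B' : Finset V := B ∪ C with hB'def
    have hCA : Disjoint A C := by
      refine Finset.disjoint_left.2 fun x hxA hxC => ?_
      exact (Finset.mem_sdiff.1 hxC).2 (Finset.mem_union_left _ hxA)
    have hCB : Disjoint B C := by
      refine Finset.disjoint_left.2 fun x hxB hxC => ?_
      exact (Finset.mem_sdiff.1 hxC).2 (Finset.mem_union_right _ hxB)
    have hCS : ∀ x ∈ C, x ∈ S := fun x hx =>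
      Set.mem_toFinset.1 (Finset.mem_sdiff.1 hx).1
    have hA'S : ↑A' ⊆ S := by
      intro x hx
      rcases Finset.mem_union.1 hx with h | h
      · exact hA h
      · exact hCS x h
    have hB'S : ↑B' ⊆ S := by
      intro x hx
      rcases Finset.mem_union.1 hx with h | h
      · exact hB h
      · exact hCS x h
    have hcard' : A'.card = B'.card := by
      rw [hA'def, hB'def, Finset.card_union_of_disjoint hCA,
        Finset.card_union_of_disjoint hCB, hcard]
    obtain ⟨σ', p', hpath, hdisj⟩ := hWL A' B' hA'S hB'S hcard'
    -- every vertex of S is in A' or in B'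
    have hScover : ∀ v ∈ S, v ∈ A' ∨ v ∈ B' := by
      intro v hv
      by_cases hvA : v ∈ A
      · exact Or.inl (Finset.mem_union_left _ hvA)
      by_cases hvB : v ∈ B
      · exact Or.inr (Finset.mem_union_left _ hvB)
      · exact Or.inl (Finset.mem_union_right _ (Finset.mem_sdiff.2
          ⟨Set.mem_toFinset.2 hv, fun h => by
            rcases Finset.mem_union.1 h with h | h
            · exact hvA h
            · exact hvB h⟩))
    -- general fact: vertices of S on a path are its endpoints
    have hgen : ∀ (a : A') (v : V), v ∈ (p' a).support → v ∈ S →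
        v = (a : V) ∨ v = ((σ' a : V)) := by
      intro a v hvsup hvS
      rcases hScover v hvS with h | h
      · left
        by_contra hne
        have hab : a ≠ ⟨v, h⟩ := by
          intro heq
          exact hne (by rw [heq])
        exact hdisj a ⟨v, h⟩ hab v hvsup ((p' ⟨v, h⟩).start_mem_support)
      · set b : {x // x ∈ B'} := ⟨v, h⟩ with hbdef
        set a₂ : {x // x ∈ A'} := σ'.symm b with ha₂def
        have hend : ((σ' a₂ : V)) ∈ (p' a₂).support := (p' a₂).end_mem_support
        have hσa₂ : σ' a₂ = b := σ'.apply_symm_apply b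
        have hvend : v ∈ (p' a₂).support := by
          have hcoe : ((σ' a₂ : V)) = v := congrArg Subtype.val hσa₂
          rw [← hcoe]
          exact hend
        by_cases heq : a = a₂
        · right
          rw [heq, hσa₂]
        · exact absurd hvend (hdisj a a₂ heq v hvsup)
    -- image of A under σ' lands in B
    have hmapB : ∀ (a : A'), (a : V) ∈ A → ((σ' a : V)) ∈ B := by
      intro a haA
      have hmem : ((σ' a : V)) ∈ B' := (σ' a).2
      rcases Finset.mem_union.1 hmem with h | h
      · exact h
      · exfalso
        have hvA' : ((σ' a : V)) ∈ A' := Finset.mem_union_right _ h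
        set b : {x // x ∈ A'} := ⟨(σ' a : V), hvA'⟩ with hbdef
        by_cases heq : a = b
        · have : (a : V) ∈ C := by rw [heq]; exact h
          exact Finset.disjoint_left.1 hCA haA this
        · exact hdisj a b heq ((σ' a : V)) (p' a).end_mem_support
            ((p' b).start_mem_support)
    -- the inclusion A → A'
    have hιmem : ∀ a : A, (a : V) ∈ A' := fun a => Finset.mem_union_left _ a.2
    set ι : A → {x // x ∈ A'} := fun a => ⟨(a : V), hιmem a⟩ with hιdef
    have hιinj : Function.Injective ι := by
      intro a a' h
      have hv : (a : V) = (a' : V) :=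
        congrArg (fun z : {x // x ∈ A'} => (z : V)) h
      exact Subtype.ext hv
    set f : A → B := fun a => ⟨((σ' (ι a) : V)), hmapB (ι a) a.2⟩ with hfdef
    have hfinj : Function.Injective f := by
      intro a a' h
      have hv : ((σ' (ι a) : V)) = ((σ' (ι a') : V)) :=
        congrArg (fun z : {x // x ∈ B} => (z : V)) h
      exact hιinj (σ'.injective (Subtype.ext hv))
    have hfbij : Function.Bijective f :=
      (Fintype.bijective_iff_injective_and_card f).2
        ⟨hfinj, by simp [Fintype.card_coe, hcard]⟩
    set σ : A ≃ B := Equiv.ofBijective f hfbij with hσdef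
    refine ⟨σ, fun a => p' (ι a), fun a => hpath (ι a), ?_, ?_⟩
    · intro a a' hne v hv
      have : ι a ≠ ι a' := fun h => hne (hιinj h)
      exact hdisj (ι a) (ι a') this v hv
    · intro a v hv hvS
      rcases hgen (ι a) v hv hvS with h | h
      · exact Or.inl h
      · exact Or.inr h
  · intro hEWL A B hA hB hcard
    obtain ⟨σ, p, h1, h2, _⟩ := hEWL A B hA hB hcard
    exact ⟨σ, p, h1, h2⟩

end TWPaper
end

section
/- For every graph G, wl(G) <= 3·link(G): the maximum size of a well-linked set is at most three times the linkedness of G. -/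
open SimpleGraph

namespace TWPaper

section Aux
variable {V : Type} [Fintype V] {G : SimpleGraph V} {X S : Set V}

lemma walk_avoid {a b : V} (w : G.Walk a b)
    (hs : ∀ v ∈ w.support, v ∉ X) : (delVerts G X).Reachable a b := by
  induction w with
  | nil => exact Reachable.refl _
  | @cons u c b hadj p ih =>
      have hu : u ∉ X := hs u (by simp)
      have hc : c ∉ X := hs c (by simp)
      exact Reachable.trans (SimpleGraph.Adj.reachable ⟨hadj, hu, hc⟩)
        (ih (fun v hv => hs v (by simp [hv])))

lemma mem_comp_self (v : V) : v ∈ comp G X v := Reachable.refl v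

lemma comp_not_mem_X {v w : V} (hv : v ∉ X) (hw : w ∈ comp G X v) : w ∉ X := by
  obtain ⟨q⟩ := (hw : (delVerts G X).Reachable v w).symm
  cases q with
  | nil => exact hv
  | cons h _ => exact h.2.1

lemma endgame (hWL : WellLinked G S) (A B : Finset V) (hA : ↑A ⊆ S) (hB : ↑B ⊆ S)
    (hcard : A.card = X.ncard + 1) (hBcard : B.card = X.ncard + 1)
    (hsep : ∀ a ∈ A, ∀ b ∈ B, b ∈ X ∨ ¬ (delVerts G X).Reachable a b) : False := by
  obtain ⟨σ, p, hpath, hdisj⟩ := hWL A B hA hB (by omega)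
  have hex : ∀ a : A, ∃ v, v ∈ (p a).support ∧ v ∈ X := by
    intro a
    by_contra hcon
    push_neg at hcon
    have hreach := walk_avoid (p a) (fun v hv => hcon v hv)
    rcases hsep a a.2 (σ a) (σ a).2 with hx | hnr
    · exact hcon (σ a) ((p a).end_mem_support) hx
    · exact hnr hreach
  choose f hf1 hf2 using hex
  have hinj : Function.Injective (fun a : A => (⟨f a, hf2 a⟩ : X)) := by
    intro a a' h
    by_contra hne
    have hv : f a = f a' := congrArg Subtype.val h
    exact (hdisj a a' hne (f a) (hf1 a)) (hv ▸ hf1 a')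
  have h1 : Nat.card A ≤ Nat.card X := Nat.card_le_card_of_injective _ hinj
  rw [Nat.card_eq_fintype_card, Fintype.card_coe, Nat.card_coe_set_eq] at h1
  omega

end Aux

lemma wl_isLinked {V : Type} [Fintype V] {G : SimpleGraph V} {S : Set V}
    (hWL : WellLinked G S) (hn : 1 ≤ S.ncard) :
    IsLinked G ((S.ncard + 2) / 3) S := by
  classical
  intro X hX
  by_contra hcon
  push_neg at hcon
  set n := S.ncard with hndef
  set x := X.ncard with hxdef
  have hx3 : 3 * x + 1 ≤ n := by omega
  have hfS : S.Finite := Set.toFinite S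
  have hfT : (S \ X).Finite := Set.toFinite _
  set Sf : Finset V := hfS.toFinset with hSf
  set T : Finset V := hfT.toFinset with hT
  have hSfcard : Sf.card = n := (Set.ncard_eq_toFinset_card S hfS).symm
  have hTS : T ⊆ Sf := by
    intro v hv
    rw [hT, Set.Finite.mem_toFinset] at hv
    rw [hSf, Set.Finite.mem_toFinset]
    exact hv.1
  have hTmem : ∀ v, v ∈ T ↔ v ∈ S ∧ v ∉ X := by
    intro v; rw [hT, Set.Finite.mem_toFinset]; exact Iff.rfl
  have hTcard : 2 * x + 1 ≤ T.card := by
    have h1 : S ⊆ (S \ X) ∪ X := fun v hv => by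
      by_cases hvX : v ∈ X
      · exact Or.inr hvX
      · exact Or.inl ⟨hv, hvX⟩
    have h2 : S.ncard ≤ ((S \ X) ∪ X).ncard := Set.ncard_le_ncard h1 (Set.toFinite _)
    have h3 : ((S \ X) ∪ X).ncard ≤ (S \ X).ncard + X.ncard := Set.ncard_union_le _ _
    have h4 : T.card = (S \ X).ncard := (Set.ncard_eq_toFinset_card _ hfT).symm
    omega
  -- get A, B finsets of size x+1 and separated, then contradiction via endgame
  by_cases hbig : ∃ v ∈ T, x + 1 ≤ (comp G X v ∩ S).ncard
  · obtain ⟨v, hvT, hcv⟩ := hbig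
    obtain ⟨hvS, hvX⟩ := (hTmem v).1 hvT
    have hfC : (comp G X v ∩ S).Finite := Set.toFinite _
    set CF : Finset V := hfC.toFinset with hCF
    have hCFmem : ∀ w, w ∈ CF ↔ w ∈ comp G X v ∧ w ∈ S := by
      intro w; rw [hCF, Set.Finite.mem_toFinset]; exact Iff.rfl
    have hCFcard : CF.card = (comp G X v ∩ S).ncard :=
      (Set.ncard_eq_toFinset_card _ hfC).symm
    have hCFS : CF ⊆ Sf := by
      intro w hw
      rw [hSf, Set.Finite.mem_toFinset]
      exact ((hCFmem w).1 hw).2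
    have h2c : 2 * (comp G X v ∩ S).ncard ≤ n := hcon v hvX
    obtain ⟨A, hAsub, hAcard⟩ := Finset.exists_subset_card_eq (by omega : x + 1 ≤ CF.card)
    have hBFcard : x + 1 ≤ (Sf \ CF).card := by
      rw [Finset.card_sdiff_of_subset hCFS]
      omega
    obtain ⟨B, hBsub, hBcard⟩ := Finset.exists_subset_card_eq hBFcard
    refine endgame hWL A B ?_ ?_ hAcard hBcard ?_
    · intro a ha; exact ((hCFmem a).1 (hAsub ha)).2
    · intro b hb
      have := hBsub hb
      rw [Finset.mem_sdiff, Set.Finite.mem_toFinset] at this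
      exact this.1
    · intro a ha b hb
      have haC := (hCFmem a).1 (hAsub ha)
      have hbB := hBsub hb
      rw [Finset.mem_sdiff] at hbB
      by_cases hbX : b ∈ X
      · exact Or.inl hbX
      · refine Or.inr (fun hr => ?_)
        have hbS : b ∈ S := hfS.mem_toFinset.1 hbB.1
        exact hbB.2 ((hCFmem b).2 ⟨Reachable.trans (haC.1 : (delVerts G X).Reachable v a) hr, hbS⟩)
  · push_neg at hbig
    -- minimal closed set U of size ≥ x+1
    set P : Finset V → Prop := fun U => (x + 1 ≤ U.card ∧
      ∀ a ∈ U, ∀ b ∈ T, (delVerts G X).Reachable a b → b ∈ U) with hP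
    have hTP : P T := ⟨by omega, fun a _ b hb _ => hb⟩
    obtain ⟨U, hUmem, hUmin⟩ := Finset.exists_min_image
      (T.powerset.filter P) Finset.card
      ⟨T, by rw [Finset.mem_filter, Finset.mem_powerset]; exact ⟨Finset.Subset.refl T, hTP⟩⟩
    rw [Finset.mem_filter, Finset.mem_powerset] at hUmem
    obtain ⟨hUT, hUcard, hUclosed⟩ := hUmem
    obtain ⟨a₀, ha₀U⟩ := Finset.card_pos.1 (by omega : 0 < U.card)
    set C : Finset V := T.filter (fun b => (delVerts G X).Reachable a₀ b) with hC
    have ha₀T := hUT ha₀U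
    have ha₀C : a₀ ∈ C := by
      rw [hC, Finset.mem_filter]; exact ⟨ha₀T, Reachable.refl _⟩
    have hCU : C ⊆ U := by
      intro b hb
      rw [hC, Finset.mem_filter] at hb
      exact hUclosed a₀ ha₀U b hb.1 hb.2
    have hCcard : C.card ≤ x := by
      have hsub : (↑C : Set V) ⊆ comp G X a₀ ∩ S := by
        intro b hb
        rw [Finset.mem_coe, hC, Finset.mem_filter] at hb
        exact ⟨hb.2, ((hTmem b).1 hb.1).1⟩
      have := Set.ncard_le_ncard hsub (Set.toFinite _)
      rw [Set.ncard_coe_finset] at this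
      have h5 := hbig a₀ ha₀T
      omega
    have hUC : U.card ≤ 2 * x := by
      by_contra hUC'
      push_neg at hUC'
      have hclosed' : P (U \ C) := by
        constructor
        · rw [Finset.card_sdiff_of_subset hCU]; omega
        · intro a ha b hb hr
          rw [Finset.mem_sdiff] at ha
          rw [Finset.mem_sdiff]
          refine ⟨hUclosed a ha.1 b hb hr, fun hbC => ?_⟩
          rw [hC, Finset.mem_filter] at hbC
          exact ha.2 (by
            rw [hC, Finset.mem_filter]
            exact ⟨hUT ha.1, Reachable.trans hbC.2 hr.symm⟩)
      have hmin := hUmin (U \ C) (by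
        rw [Finset.mem_filter, Finset.mem_powerset]
        exact ⟨Finset.Subset.trans (Finset.sdiff_subset) hUT, hclosed'⟩)
      have : (U \ C).card = U.card - C.card := Finset.card_sdiff_of_subset hCU
      have hCpos : 0 < C.card := Finset.card_pos.2 ⟨a₀, ha₀C⟩
      omega
    obtain ⟨A, hAsub, hAcard⟩ := Finset.exists_subset_card_eq (by omega : x + 1 ≤ U.card)
    have hUSf : U ⊆ Sf := Finset.Subset.trans hUT hTS
    have hBFcard : x + 1 ≤ (Sf \ U).card := by
      rw [Finset.card_sdiff_of_subset hUSf]; omega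
    obtain ⟨B, hBsub, hBcard⟩ := Finset.exists_subset_card_eq hBFcard
    refine endgame hWL A B ?_ ?_ hAcard hBcard ?_
    · intro a ha; exact ((hTmem a).1 (hUT (hAsub ha))).1
    · intro b hb
      have := hBsub hb
      rw [Finset.mem_sdiff, Set.Finite.mem_toFinset] at this
      exact this.1
    · intro a ha b hb
      have hbB := hBsub hb
      rw [Finset.mem_sdiff] at hbB
      by_cases hbX : b ∈ X
      · exact Or.inl hbX
      · refine Or.inr (fun hr => ?_)
        have hbS : b ∈ S := hfS.mem_toFinset.1 hbB.1
        exact hbB.2 (hUclosed a (hAsub ha) b ((hTmem b).2 ⟨hbS, hbX⟩) hr)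

/-- wl(G) ≤ 3·link(G). -/
theorem wellLinkedNum_le_linkedness {V : Type} [Fintype V] (G : SimpleGraph V) :
    wellLinkedNum G ≤ 3 * linkedness G := by
  classical
  apply csSup_le'
  rintro n ⟨S, hWL, rfl⟩
  by_cases hn : 1 ≤ S.ncard
  · have hlink := wl_isLinked hWL hn
    have hmem : (S.ncard + 2) / 3 ∈ {k | 0 < k ∧ ∃ S : Set V, IsLinked G k S} :=
      ⟨by omega, S, hlink⟩
    have hbdd : BddAbove {k | 0 < k ∧ ∃ S : Set V, IsLinked G k S} := by
      refine ⟨Fintype.card V + 1, ?_⟩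
      rintro m ⟨hm, S', hS'⟩
      by_contra hbig
      push_neg at hbig
      have huniv : (Set.univ : Set V).ncard < m := by
        rw [Set.ncard_univ, Nat.card_eq_fintype_card]; omega
      obtain ⟨v, hv, -⟩ := hS' Set.univ huniv
      exact hv (Set.mem_univ v)
    have h2 : (S.ncard + 2) / 3 ≤ linkedness G := le_csSup hbdd hmem
    omega
  · omega

end TWPaper
end
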